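/- arXiv:1505.07177 — 4 statements merged into one kernel-verified Lean document; each statement's English description precedes it below -/
import Mathlib

section
/- Let f : S¹ → S¹ be a homeomorphism of the circle. Then the topological entropy of f is zero. -/
open Filter Topology MeasureTheory

/-- `E` is an `(ε,n)`-separated set for `f`. -/
def IsSeparated {X : Type*} [MetricSpace X] (f : X → X) (ε : ℝ) (n : ℕ) (E : Set X) : Prop :=
  ∀ x ∈ E, ∀ y ∈ E, x ≠ y → ∃ k < n, ε < dist (f^[k] x) (f^[k] y)

/-- Maximal cardinality of an `(ε,n)`-separated set. -/
noncomputable def sepCount {X : Type*} [MetricSpace X] (f : X → X) (ε : ℝ) (n : ℕ) : ℕ :=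
  sSup {m : ℕ | ∃ E : Finset X, IsSeparated f ε n ↑E ∧ E.card = m}

/-- Exponential growth rate of `(ε,n)`-separated sets. -/
noncomputable def entSep {X : Type*} [MetricSpace X] (f : X → X) (ε : ℝ) : ℝ :=
  Filter.limsup (fun n : ℕ => Real.log (sepCount f ε n) / n) Filter.atTop

/-- Topological entropy via separated sets: the limit as `ε → 0` (equivalently, the
supremum over `ε > 0`, by monotonicity) of the growth rate of `(ε,n)`-separated sets. -/
noncomputable def topEnt {X : Type*} [MetricSpace X] (f : X → X) : ℝ :=
  ⨆ ε : {e : ℝ // 0 < e}, entSep f ε.1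

/-- Growth rate of periodic points: `limsup (1/n) log card Fix(fⁿ)`. -/
noncomputable def perGrowth {X : Type*} [MetricSpace X] (f : X → X) : ℝ :=
  Filter.limsup (fun n : ℕ => Real.log (({x : X | f^[n] x = x}).ncard) / n) Filter.atTop

open Set Complex Filter Topology

noncomputable section

namespace CircleEnt

/-- grid points -/
def c (m : ℕ) (j : ℕ) : ℝ := -Real.pi + 2 * Real.pi * j / m

lemma c_zero (m : ℕ) : c m 0 = -Real.pi := by simp [c]

lemma c_self {m : ℕ} (hm : 0 < m) : c m m = Real.pi := by
  have hm' : (m:ℝ) ≠ 0 := by positivity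
  simp only [c]
  rw [mul_div_assoc, div_self hm']
  ring

lemma c_mono (m : ℕ) : Monotone (c m) := by
  intro i j hij
  have h2 : (0:ℝ) ≤ 2 * Real.pi / m := by positivity
  have : (i:ℝ) ≤ j := by exact_mod_cast hij
  simp only [c]
  gcongr

lemma c_succ_sub (m : ℕ) (j : ℕ) (hm : 0 < m) : c m (j+1) - c m j = 2 * Real.pi / m := by
  have : (m:ℝ) ≠ 0 := by positivity
  simp only [c]
  push_cast
  ring

lemma dist_exp_le {s t : ℝ} (h : |s - t| ≤ 1) :
    dist (Circle.exp s) (Circle.exp t) ≤ 2 * |s - t| := by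
  have e1 : dist (Circle.exp s) (Circle.exp t)
      = ‖(Complex.exp (s * Complex.I) - Complex.exp (t * Complex.I))‖ := by
    rw [show dist (Circle.exp s) (Circle.exp t) = dist (Circle.exp s : ℂ) (Circle.exp t : ℂ) from rfl,
      Complex.dist_eq]
    rfl
  have e2 : Complex.exp (s * Complex.I) - Complex.exp (t * Complex.I)
      = Complex.exp (t * Complex.I) * (Complex.exp ((↑(s - t)) * Complex.I) - 1) := by
    rw [mul_sub, ← Complex.exp_add, mul_one]
    push_cast
    ring_nf
  have e3 : ‖((↑(s - t)) * Complex.I)‖ = |s - t| := by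
    rw [norm_mul, Complex.norm_I, mul_one, Complex.norm_real, Real.norm_eq_abs]
  rw [e1, e2, norm_mul, Complex.norm_exp_ofReal_mul_I, one_mul]
  calc ‖(Complex.exp ((↑(s - t)) * Complex.I) - 1)‖
      ≤ 2 * ‖((↑(s - t)) * Complex.I)‖ :=
        Complex.norm_exp_sub_one_le (by rw [e3]; exact h)
    _ = 2 * |s - t| := by rw [e3]

lemma exp_injOn {s t : ℝ} (hs : s ∈ Ioc (-Real.pi) Real.pi)
    (ht : t ∈ Ioc (-Real.pi) Real.pi) (h : Circle.exp s = Circle.exp t) : s = t := by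
  rw [← Circle.arg_exp hs.1 hs.2, ← Circle.arg_exp ht.1 ht.2, h]

lemma exists_icc {c : ℕ → ℝ} (hc : Monotone c) {m : ℕ} (hm : 0 < m) {a : ℝ}
    (h0 : c 0 ≤ a) (h1 : a ≤ c m) : ∃ j, j < m ∧ c j ≤ a ∧ a ≤ c (j+1) := by
  induction m with
  | zero => omega
  | succ k ih =>
    rcases le_or_gt a (c k) with h | h
    · rcases Nat.eq_zero_or_pos k with rfl | hk
      · exact ⟨0, Nat.zero_lt_one, h0, h.trans (hc (Nat.zero_le 1))⟩
      · obtain ⟨j, hj1, hj2, hj3⟩ := ih hk h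
        exact ⟨j, by omega, hj2, hj3⟩
    · exact ⟨k, by omega, h.le, h1⟩


/-- The grid set. -/
def G (m : ℕ) : Set Circle := {z | ∃ j ≤ m, z = Circle.exp (c m j)}

lemma c_mem_Ioc {m : ℕ} (hm : 0 < m) {j : ℕ} (hj : j ≤ m) (hj0 : 0 < j) :
    c m j ∈ Ioc (-Real.pi) Real.pi := by
  constructor
  · have h1 : c m 0 ≤ c m j := c_mono m (Nat.zero_le j)
    rcases Nat.eq_zero_or_pos j with rfl | hj0'
    · omega
    · have : c m 0 < c m 1 := by
        have := c_succ_sub m 0 hm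
        have h2 : (0:ℝ) < 2 * Real.pi / m := by positivity
        nlinarith [c_mono m hj0']
      calc -Real.pi = c m 0 := (c_zero m).symm
        _ < c m 1 := this
        _ ≤ c m j := c_mono m hj0'
  · calc c m j ≤ c m m := c_mono m hj
      _ = Real.pi := c_self hm

/-- Any preconnected subset of the circle avoiding the grid is contained in a small arc;
hence any two points of its closure are `ε`-close. -/
lemma arc_small {m : ℕ} (hm : 0 < m) {ε : ℝ} (h4 : 4 * Real.pi / m ≤ ε)
    (h21 : 2 * Real.pi / m ≤ 1) {S : Set Circle} (hS : IsPreconnected S)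
    (hSG : ∀ z ∈ S, z ∉ G m) (hne : S.Nonempty)
    {x y : Circle} (hx : x ∈ closure S) (hy : y ∈ closure S) :
    dist x y ≤ ε := by
  set U : ℕ → Set Circle := fun j => Circle.exp '' Ioo (c m j) (c m (j+1)) with hU
  have hIoc : ∀ j < m, Ioo (c m j) (c m (j+1)) ⊆ Ioc (-Real.pi) Real.pi := by
    intro j hj s hs
    constructor
    · calc -Real.pi = c m 0 := (c_zero m).symm
        _ ≤ c m j := c_mono m (Nat.zero_le j)
        _ < s := hs.1
    · calc s ≤ c m (j+1) := hs.2.le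
        _ ≤ c m m := c_mono m (by omega)
        _ = Real.pi := c_self hm
  have hUopen : ∀ j, IsOpen (U j) :=
    fun j => isLocalHomeomorph_circleExp.isOpenMap _ isOpen_Ioo
  have hUdisj : ∀ i < m, ∀ j < m, i ≠ j → Disjoint (U i) (U j) := by
    intro i hi j hj hij
    rw [Set.disjoint_left]
    rintro z ⟨s, hs, rfl⟩ ⟨t, ht, hexp⟩
    have hst : s = t := exp_injOn (hIoc i hi hs) (hIoc j hj ht) hexp.symm
    subst hst
    rcases Nat.lt_or_ge i j with h | h
    · exact absurd (hs.2.trans_le ((c_mono m (by omega)).trans ht.1.le)) (lt_irrefl s)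
    · have : i ≠ j := hij
      have hji : j < i := by omega
      exact absurd (ht.2.trans_le ((c_mono m (by omega)).trans hs.1.le)) (lt_irrefl s)
  have hcover : ∀ z ∈ S, ∃ j < m, z ∈ U j := by
    intro z hz
    have hzG : z ∉ G m := hSG z hz
    have harg : Complex.arg ↑z ∈ Ioc (-Real.pi) Real.pi :=
      ⟨Complex.neg_pi_lt_arg _, Complex.arg_le_pi _⟩
    have hze : Circle.exp (Complex.arg ↑z) = z := Circle.exp_arg z
    have hlt : Complex.arg ↑z < Real.pi := by
      rcases lt_or_eq_of_le harg.2 with h | h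
      · exact h
      · exfalso
        exact hzG ⟨m, le_refl m, by rw [← hze, h, c_self hm]⟩
    obtain ⟨j, hj, hj1, hj2⟩ := exists_icc (c := c m) (a := Complex.arg ↑z) (c_mono m) hm
      ((le_of_eq (c_zero m)).trans harg.1.le) (hlt.le.trans (le_of_eq (c_self hm).symm))
    refine ⟨j, hj, ?_⟩
    rcases lt_or_eq_of_le hj1 with h1 | h1
    · rcases lt_or_eq_of_le hj2 with h2 | h2
      · exact ⟨Complex.arg ↑z, ⟨h1, h2⟩, hze⟩
      · exact absurd ⟨j+1, by omega, by rw [← hze, h2]⟩ hzG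
    · exact absurd ⟨j, by omega, by rw [← hze, ← h1]⟩ hzG
  obtain ⟨z₀, hz₀⟩ := hne
  obtain ⟨j₀, hj₀, hz₀U⟩ := hcover z₀ hz₀
  have hSU : S ⊆ U j₀ := by
    apply hS.subset_left_of_subset_union (hUopen j₀)
      (isOpen_biUnion (fun j (_ : j ∈ {i : ℕ | i < m ∧ i ≠ j₀}) => hUopen j))
    · rw [Set.disjoint_left]
      rintro z hz1 hz2
      simp only [Set.mem_iUnion, Set.mem_setOf_eq] at hz2
      obtain ⟨j, ⟨hjm, hjne⟩, hzj⟩ := hz2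
      exact Set.disjoint_left.mp (hUdisj j₀ hj₀ j hjm (Ne.symm hjne)) hz1 hzj
    · intro z hz
      obtain ⟨j, hj, hzj⟩ := hcover z hz
      rcases eq_or_ne j j₀ with rfl | hne'
      · exact Or.inl hzj
      · refine Or.inr ?_
        simp only [Set.mem_iUnion, Set.mem_setOf_eq]
        exact ⟨j, ⟨hj, hne'⟩, hzj⟩
    · exact ⟨z₀, hz₀, hz₀U⟩
  have hclosed : IsClosed (Circle.exp '' Icc (c m j₀) (c m (j₀+1))) :=
    (isCompact_Icc.image Circle.exp.continuous).isClosed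
  have hcl : closure S ⊆ Circle.exp '' Icc (c m j₀) (c m (j₀+1)) :=
    closure_minimal (hSU.trans (Set.image_mono Ioo_subset_Icc_self)) hclosed
  obtain ⟨s, hs, rfl⟩ := hcl hx
  obtain ⟨t, ht, rfl⟩ := hcl hy
  have hlen : |s - t| ≤ 2 * Real.pi / m := by
    have := c_succ_sub m j₀ hm
    rw [abs_sub_le_iff]
    constructor <;> nlinarith [hs.1, hs.2, ht.1, ht.2]
  calc dist (Circle.exp s) (Circle.exp t) ≤ 2 * |s - t| :=
        dist_exp_le (hlen.trans h21)
    _ ≤ 2 * (2 * Real.pi / m) := by nlinarith [abs_nonneg (s - t)]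
    _ = 4 * Real.pi / m := by ring
    _ ≤ ε := h4

/-- Main counting bound: an `(ε,n)`-separated set has at most `n*(m+1)+1` elements. -/
lemma card_le (f : Circle ≃ₜ Circle) {ε : ℝ} {n m : ℕ} (hm : 0 < m)
    (h4 : 4 * Real.pi / m ≤ ε) (h21 : 2 * Real.pi / m ≤ 1)
    (E : Finset Circle) (hE : IsSeparated (⇑f) ε n ↑E) :
    E.card ≤ n * (m + 1) + 1 := by
  rcases E.eq_empty_or_nonempty with rfl | hEne
  · simp
  classical
  set Gf : Finset Circle := (Finset.range (m+1)).image (fun j => Circle.exp (c m j)) with hGf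
  have hGfG : ∀ z : Circle, z ∈ Gf → z ∈ G m := by
    intro z hz
    simp only [hGf, Finset.mem_image, Finset.mem_range] at hz
    obtain ⟨j, hj, rfl⟩ := hz
    exact ⟨j, by omega, rfl⟩
  set Pf : Finset Circle :=
    (Finset.range n).biUnion (fun k => Gf.image ((⇑f.symm)^[k])) with hPf
  have hmemPf : ∀ (x : Circle) (k : ℕ), k < n → (⇑f)^[k] x ∈ Gf → x ∈ Pf := by
    intro x k hk hx
    have hli : Function.LeftInverse ((⇑f.symm)^[k]) ((⇑f)^[k]) :=
      Function.LeftInverse.iterate f.symm_apply_apply k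
    simp only [hPf, Finset.mem_biUnion, Finset.mem_range, Finset.mem_image]
    exact ⟨k, hk, (⇑f)^[k] x, hx, hli x⟩
  have hPfcard : Pf.card ≤ n * (m + 1) := by
    calc Pf.card ≤ ∑ k ∈ Finset.range n, (Gf.image ((⇑f.symm)^[k])).card :=
          Finset.card_biUnion_le
      _ ≤ ∑ _k ∈ Finset.range n, (m + 1) := by
          refine Finset.sum_le_sum fun k _ => ?_
          calc (Gf.image ((⇑f.symm)^[k])).card ≤ Gf.card := Finset.card_image_le
            _ ≤ (Finset.range (m+1)).card := Finset.card_image_le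
            _ = m + 1 := Finset.card_range _
      _ = n * (m + 1) := by simp [mul_comm]
  set A : Finset ℝ := E.image (fun z : Circle => Complex.arg ↑z) with hA
  have hAcard : A.card = E.card := Finset.card_image_of_injective E Circle.injective_arg
  have hAne : A.Nonempty := hEne.image _
  set M : ℝ := A.max' hAne with hM
  -- every element of `A.erase M` has a grid-iterate point strictly between it
  -- and the next element of `A`
  have key : ∀ t ∈ A.erase M, ∃ s : ℝ,
      t < s ∧ s < Real.pi ∧ (∀ u ∈ A, t < u → s < u) ∧ Circle.exp s ∈ Pf := by
    intro t ht
    obtain ⟨htne, htA⟩ := Finset.mem_erase.mp ht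
    have htM : t < M := lt_of_le_of_ne (A.le_max' t htA) htne
    have hBne : (A.filter (fun u => t < u)).Nonempty :=
      ⟨M, Finset.mem_filter.mpr ⟨A.max'_mem hAne, htM⟩⟩
    set b : ℝ := (A.filter (fun u => t < u)).min' hBne with hb
    have hbmem := (A.filter (fun u => t < u)).min'_mem hBne
    rw [Finset.mem_filter] at hbmem
    have htb : t < b := hbmem.2
    have hbA : b ∈ A := hbmem.1
    obtain ⟨x, hxE, hxarg⟩ := Finset.mem_image.mp htA
    obtain ⟨y, hyE, hyarg⟩ := Finset.mem_image.mp hbA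
    have hxexp : Circle.exp t = x := by rw [← hxarg]; exact Circle.exp_arg x
    have hyexp : Circle.exp b = y := by rw [← hyarg]; exact Circle.exp_arg y
    have htpi : -Real.pi < t := by rw [← hxarg]; exact Complex.neg_pi_lt_arg _
    have hbpi : b ≤ Real.pi := by rw [← hyarg]; exact Complex.arg_le_pi _
    have hxy : x ≠ y := by
      intro h
      rw [← hxarg, ← hyarg, h] at htb
      exact lt_irrefl _ htb
    obtain ⟨k, hk, hdist⟩ := hE x hxE y hyE hxy
    by_contra hcon
    push_neg at hcon
    -- then no iterate of the open arc meets the grid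
    have hnoP : ∀ s ∈ Set.Ioo t b, ∀ k' < n, (⇑f)^[k'] (Circle.exp s) ∉ G m := by
      intro s hs k' hk' hmem
      obtain ⟨j, hj, hje⟩ := hmem
      have : (⇑f)^[k'] (Circle.exp s) ∈ Gf := by
        simp only [hGf, Finset.mem_image, Finset.mem_range]
        rcases Nat.lt_or_ge j m with h | h
        · exact ⟨j, by omega, hje.symm⟩
        · have hjm : j = m := by omega
          refine ⟨0, by omega, ?_⟩
          rw [hje, hjm, c_self hm, c_zero]
          rw [show -Real.pi = Real.pi - 2*Real.pi by ring, Circle.exp_sub_two_pi]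
      have hsP : Circle.exp s ∈ Pf := hmemPf _ k' hk' this
      have h1 : t < s := hs.1
      have h2 : s < Real.pi := lt_of_lt_of_le hs.2 hbpi
      have h3 : ∀ u ∈ A, t < u → s < u := by
        intro u huA htu
        exact lt_of_lt_of_le hs.2 (Finset.min'_le _ u (Finset.mem_filter.mpr ⟨huA, htu⟩))
      exact hcon s h1 h2 h3 hsP
    -- apply arc_small to the image of the open arc
    have hSpre : IsPreconnected ((⇑f)^[k] '' (⇑Circle.exp '' Set.Ioo t b)) :=
      ((isPreconnected_Ioo.image _ Circle.exp.continuous.continuousOn).image _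
        ((f.continuous.iterate k).continuousOn))
    have hSG : ∀ z ∈ (⇑f)^[k] '' (⇑Circle.exp '' Set.Ioo t b), z ∉ G m := by
      rintro z ⟨w, ⟨s, hs, rfl⟩, rfl⟩
      exact hnoP s hs k hk
    have hSne : ((⇑f)^[k] '' (⇑Circle.exp '' Set.Ioo t b)).Nonempty :=
      ((Set.nonempty_Ioo.mpr htb).image _).image _
    have hxcl : (⇑f)^[k] x ∈ closure ((⇑f)^[k] '' (⇑Circle.exp '' Set.Ioo t b)) := by
      have h1 : Circle.exp t ∈ closure (⇑Circle.exp '' Set.Ioo t b) := by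
        apply image_closure_subset_closure_image Circle.exp.continuous
        rw [closure_Ioo htb.ne]
        exact ⟨t, Set.left_mem_Icc.mpr htb.le, rfl⟩
      rw [← hxexp]
      exact image_closure_subset_closure_image (f.continuous.iterate k)
        ⟨Circle.exp t, h1, rfl⟩
    have hycl : (⇑f)^[k] y ∈ closure ((⇑f)^[k] '' (⇑Circle.exp '' Set.Ioo t b)) := by
      have h1 : Circle.exp b ∈ closure (⇑Circle.exp '' Set.Ioo t b) := by
        apply image_closure_subset_closure_image Circle.exp.continuous
        rw [closure_Ioo htb.ne]
        exact ⟨b, Set.right_mem_Icc.mpr htb.le, rfl⟩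
      rw [← hyexp]
      exact image_closure_subset_closure_image (f.continuous.iterate k)
        ⟨Circle.exp b, h1, rfl⟩
    exact absurd (arc_small hm h4 h21 hSpre hSG hSne hxcl hycl) (not_le.mpr hdist)
  -- choose the in-between grid points and build an injection into `Pf`
  have key' : ∀ t : ℝ, ∃ s : ℝ, t ∈ A.erase M →
      t < s ∧ s < Real.pi ∧ (∀ u ∈ A, t < u → s < u) ∧ Circle.exp s ∈ Pf := by
    intro t
    by_cases h : t ∈ A.erase M
    · obtain ⟨s, hs⟩ := key t h
      exact ⟨s, fun _ => hs⟩
    · exact ⟨0, fun h' => absurd h' h⟩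
  choose st hst using key'
  have hcard1 : (A.erase M).card ≤ Pf.card := by
    apply Finset.card_le_card_of_injOn (fun t => Circle.exp (st t))
    · intro t ht
      exact (hst t ht).2.2.2
    · intro t₁ ht₁ t₂ ht₂ heq
      simp only [Finset.coe_erase, Set.mem_diff, Finset.mem_coe] at ht₁ ht₂
      by_contra hne12
      have ht₁' : t₁ ∈ A.erase M := Finset.mem_erase.mpr ⟨fun h => ht₁.2 (by simp [h]), ht₁.1⟩
      have ht₂' : t₂ ∈ A.erase M := Finset.mem_erase.mpr ⟨fun h => ht₂.2 (by simp [h]), ht₂.1⟩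
      obtain ⟨h₁lt, h₁pi, h₁next, _⟩ := hst t₁ ht₁'
      obtain ⟨h₂lt, h₂pi, h₂next, _⟩ := hst t₂ ht₂'
      have ht₁pi : -Real.pi < t₁ := by
        obtain ⟨x, _, hxarg⟩ := Finset.mem_image.mp ht₁.1
        rw [← hxarg]; exact Complex.neg_pi_lt_arg _
      have ht₂pi : -Real.pi < t₂ := by
        obtain ⟨x, _, hxarg⟩ := Finset.mem_image.mp ht₂.1
        rw [← hxarg]; exact Complex.neg_pi_lt_arg _
      have hIoc₁ : st t₁ ∈ Set.Ioc (-Real.pi) Real.pi := ⟨ht₁pi.trans h₁lt, h₁pi.le⟩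
      have hIoc₂ : st t₂ ∈ Set.Ioc (-Real.pi) Real.pi := ⟨ht₂pi.trans h₂lt, h₂pi.le⟩
      have heq' : st t₁ = st t₂ := exp_injOn hIoc₁ hIoc₂ heq
      rcases lt_or_gt_of_ne hne12 with h | h
      · have := h₁next t₂ ht₂.1 h
        rw [heq'] at this
        exact absurd (this.trans h₂lt) (lt_irrefl _)
      · have := h₂next t₁ ht₁.1 h
        rw [← heq'] at this
        exact absurd (this.trans h₁lt) (lt_irrefl _)
  have : E.card - 1 ≤ n * (m+1) := by
    calc E.card - 1 = A.card - 1 := by rw [hAcard]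
      _ = (A.erase M).card := (Finset.card_erase_of_mem (A.max'_mem hAne)).symm
      _ ≤ Pf.card := hcard1
      _ ≤ n * (m+1) := hPfcard
  omega

lemma sepCount_le (f : Circle ≃ₜ Circle) {ε : ℝ} {m : ℕ} (hm : 0 < m)
    (h4 : 4 * Real.pi / m ≤ ε) (h21 : 2 * Real.pi / m ≤ 1) (n : ℕ) :
    sepCount (⇑f) ε n ≤ n * (m + 1) + 1 := by
  have hne : {k : ℕ | ∃ E : Finset Circle, IsSeparated (⇑f) ε n ↑E ∧ E.card = k}.Nonempty :=
    ⟨0, (∅ : Finset Circle), fun x hx => absurd hx (by simp), by simp⟩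
  refine csSup_le hne ?_
  rintro b ⟨E, hE, rfl⟩
  exact card_le f hm h4 h21 E hE

lemma one_le_sepCount (f : Circle ≃ₜ Circle) {ε : ℝ} {m : ℕ} (hm : 0 < m)
    (h4 : 4 * Real.pi / m ≤ ε) (h21 : 2 * Real.pi / m ≤ 1) (n : ℕ) :
    1 ≤ sepCount (⇑f) ε n := by
  apply le_csSup
  · exact ⟨n * (m + 1) + 1, by rintro b ⟨E, hE, rfl⟩; exact card_le f hm h4 h21 E hE⟩
  · refine ⟨{1}, ?_, Finset.card_singleton 1⟩
    intro x hx y hy hxy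
    simp only [Finset.coe_singleton, Set.mem_singleton_iff] at hx hy
    exact absurd (hx.trans hy.symm) hxy

lemma entSep_zero (f : Circle ≃ₜ Circle) {ε : ℝ} (hε : 0 < ε) : entSep (⇑f) ε = 0 := by
  obtain ⟨m, hm, h4, h21⟩ : ∃ m : ℕ, 0 < m ∧ 4 * Real.pi / m ≤ ε ∧ 2 * Real.pi / m ≤ 1 := by
    set m := max 7 ⌈4 * Real.pi / ε⌉₊ with hmdef
    have hm7 : (7:ℝ) ≤ (m:ℝ) := by exact_mod_cast Nat.le_max_left 7 _
    have hmpos : (0:ℝ) < (m:ℝ) := by linarith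
    have hmc : (⌈4 * Real.pi / ε⌉₊ : ℝ) ≤ (m:ℝ) := by
      exact_mod_cast Nat.le_max_right 7 _
    have h1 : 4 * Real.pi / ε ≤ (m:ℝ) := (Nat.le_ceil _).trans hmc
    rw [div_le_iff₀ hε] at h1
    refine ⟨m, by positivity, ?_, ?_⟩
    · rw [div_le_iff₀ hmpos]
      nlinarith
    · rw [div_le_one hmpos]
      nlinarith [Real.pi_lt_d2]
  have htendsto : Filter.Tendsto (fun n : ℕ => Real.log (sepCount (⇑f) ε n) / n)
      Filter.atTop (nhds 0) := by
    have hlow : ∀ n : ℕ, (0:ℝ) ≤ Real.log (sepCount (⇑f) ε n) / n := by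
      intro n
      apply div_nonneg _ (Nat.cast_nonneg n)
      apply Real.log_nonneg
      exact_mod_cast one_le_sepCount f hm h4 h21 n
    have hhi : ∀ᶠ n : ℕ in Filter.atTop, Real.log (sepCount (⇑f) ε n) / n
        ≤ Real.log n / n + Real.log (m + 2) / n := by
      filter_upwards [Filter.eventually_ge_atTop 1] with n hn
      have hnum : (sepCount (⇑f) ε n : ℝ) ≤ (n : ℝ) * (m + 2) := by
        have h1 : sepCount (⇑f) ε n ≤ n * (m + 1) + 1 := sepCount_le f hm h4 h21 n
        have h2 : n * (m + 1) + 1 ≤ n * (m + 2) := by nlinarith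
        exact_mod_cast h1.trans h2
      have hpos : (0:ℝ) < sepCount (⇑f) ε n := by
        exact_mod_cast one_le_sepCount f hm h4 h21 n
      have hlog : Real.log (sepCount (⇑f) ε n) ≤ Real.log n + Real.log (m + 2) := by
        rw [← Real.log_mul (by exact_mod_cast Nat.one_le_iff_ne_zero.mp hn) (by positivity)]
        exact Real.log_le_log hpos hnum
      rw [← add_div]
      exact div_le_div_of_nonneg_right hlog (Nat.cast_nonneg n)
    have hlim1 : Filter.Tendsto (fun n : ℕ => Real.log n / n) Filter.atTop (nhds 0) := by
      have h := Real.isLittleO_log_id_atTop.tendsto_div_nhds_zero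
      have := h.comp (tendsto_natCast_atTop_atTop (R := ℝ))
      exact this
    have hlim2 : Filter.Tendsto (fun n : ℕ => Real.log (m + 2) / n) Filter.atTop (nhds 0) :=
      tendsto_const_div_atTop_nhds_zero_nat _
    have hlim : Filter.Tendsto (fun n : ℕ => Real.log n / n + Real.log (m + 2) / n)
        Filter.atTop (nhds 0) := by
      simpa using hlim1.add hlim2
    exact tendsto_of_tendsto_of_tendsto_of_le_of_le' tendsto_const_nhds hlim
      (Filter.Eventually.of_forall hlow) hhi
  exact htendsto.limsup_eq

end CircleEnt

instance : Nonempty {e : ℝ // 0 < e} := ⟨⟨1, one_pos⟩⟩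

/-- A homeomorphism of the circle has zero topological entropy. -/
theorem stmt2 (f : Circle ≃ₜ Circle) : topEnt ⇑f = 0 := by
  have h : ∀ ε : {e : ℝ // 0 < e}, entSep (⇑f) ε.1 = 0 :=
    fun ε => CircleEnt.entSep_zero f ε.2
  rw [topEnt]
  simp only [h]
  exact ciSup_const
end
end

section
/- Let (X,d) be a compact metric space, f : X → X a homeomorphism, and μ an f-invariant Borel probability measure. Suppose f has the following closing property: for every ε > 0 there exists δ ∈ (0, ε) such that whenever d(x, f^n x) < δ for some x ∈ X and n ≥ 1, there exists a point p with f^n p = p (a periodic point) and d(p, x) ≤ ε. Then supp μ is contained in the closure of the set of periodic points of f. -/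
open Filter Topology MeasureTheory

/-- The support of a measure: points all of whose open neighborhoods have positive measure. -/
def measSupp {X : Type*} [TopologicalSpace X] [MeasurableSpace X]
    (μ : MeasureTheory.Measure X) : Set X :=
  {x : X | ∀ U : Set X, IsOpen U → x ∈ U → 0 < μ U}

/-- The closing property implies every invariant probability measure is supported on the
closure of the periodic points. -/
theorem stmt3 {X : Type*} [MetricSpace X] [CompactSpace X] [MeasurableSpace X] [BorelSpace X]
    (f : X ≃ₜ X) (μ : MeasureTheory.Measure X) [MeasureTheory.IsProbabilityMeasure μ]
    (hinv : MeasureTheory.MeasurePreserving ⇑f μ μ)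
    (hclose : ∀ ε : ℝ, 0 < ε → ∃ δ : ℝ, 0 < δ ∧ δ < ε ∧ ∀ (x : X) (n : ℕ), 1 ≤ n →
      dist x ((⇑f)^[n] x) < δ → ∃ p : X, (⇑f)^[n] p = p ∧ dist p x ≤ ε) :
    measSupp μ ⊆ closure {p : X | ∃ n : ℕ, 1 ≤ n ∧ (⇑f)^[n] p = p} := by
  intro x hx
  rw [Metric.mem_closure_iff]
  intro ε hε
  -- apply the closing property with ε/4
  obtain ⟨δ, hδ0, hδε, hδ⟩ := hclose (ε / 4) (by linarith)
  -- The ball around x of radius δ/2 has positive measure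
  set B := Metric.ball x (δ / 2) with hB
  have hBpos : μ B ≠ 0 := by
    have := hx B Metric.isOpen_ball (Metric.mem_ball_self (by linarith))
    exact this.ne'
  -- Poincaré recurrence
  obtain ⟨y, hy, m, hm, hmy⟩ :=
    hinv.exists_mem_iterate_mem (Metric.isOpen_ball.measurableSet.nullMeasurableSet) hBpos
  have hdy : dist y ((⇑f)^[m] y) < δ := by
    have h1 : dist y x < δ / 2 := hy
    have h2 : dist ((⇑f)^[m] y) x < δ / 2 := hmy
    calc dist y ((⇑f)^[m] y) ≤ dist y x + dist ((⇑f)^[m] y) x := dist_triangle_right _ _ _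
      _ < δ / 2 + δ / 2 := by linarith
      _ = δ := by ring
  obtain ⟨p, hp, hpy⟩ := hδ y m (Nat.one_le_iff_ne_zero.mpr hm) hdy
  refine ⟨p, ⟨m, Nat.one_le_iff_ne_zero.mpr hm, hp⟩, ?_⟩
  have h1 : dist y x < δ / 2 := hy
  calc dist x p ≤ dist x y + dist y p := dist_triangle _ _ _
    _ = dist y x + dist p y := by rw [dist_comm x y, dist_comm y p]
    _ < δ / 2 + ε / 4 := by linarith
    _ < ε := by linarith
end

section
/- Let (X,d) be a compact metric space and f : X → X a homeomorphism satisfying the closing property: for every ε > 0 there exists δ ∈ (0,ε) such that d(x, f^n x) < δ for some n ≥ 1 implies there is a periodic point p with d(p,x) ≤ ε. Then the topological entropy of f equals the topological entropy of f restricted to the closure of the set of periodic points of f. -/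
open Filter Topology MeasureTheory

/-! ### Auxiliary lemmas -/

section LimsupAux

private lemma ev_div_le {K γ : ℝ} (hγ : 0 < γ) : ∀ᶠ n : ℕ in atTop, K / n ≤ γ := by
  have h := tendsto_const_div_atTop_nhds_zero_nat K
  exact (h.eventually (gt_mem_nhds hγ)).mono fun n hn => le_of_lt hn

private lemma limsup_le_aux {u : ℕ → ℝ} {A K : ℝ} (h0 : ∀ n, 0 ≤ u n)
    (h : ∀ n : ℕ, 1 ≤ n → u n ≤ A + K / n) :
    Filter.limsup u Filter.atTop ≤ A := by
  rw [Filter.limsup_eq]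
  have hbdd : BddBelow {a | ∀ᶠ n : ℕ in atTop, u n ≤ a} := by
    refine ⟨0, fun a ha => ?_⟩
    obtain ⟨n, hn⟩ := ha.exists
    exact le_trans (h0 n) hn
  refine le_of_forall_pos_le_add (fun γ hγ => ?_)
  refine csInf_le hbdd ?_
  have h1 : ∀ᶠ n : ℕ in atTop, K / (n : ℝ) ≤ γ := ev_div_le hγ
  have h2 : ∀ᶠ n : ℕ in atTop, 1 ≤ n := eventually_ge_atTop 1
  filter_upwards [h1, h2] with n hn1 hn2
  have := h n hn2
  linarith

private lemma le_limsup_aux {u : ℕ → ℝ} {b c β : ℝ} (hub : ∀ n, u n ≤ b)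
    (h : ∀ n : ℕ, 1 ≤ n → c ≤ u n + β / n) :
    c ≤ Filter.limsup u Filter.atTop := by
  rw [Filter.limsup_eq]
  refine le_csInf ⟨b, Filter.Eventually.of_forall hub⟩ (fun a ha => ?_)
  refine le_of_forall_pos_le_add (fun γ hγ => ?_)
  have h1 : ∀ᶠ n : ℕ in atTop, β / (n : ℝ) ≤ γ := ev_div_le hγ
  obtain ⟨n, hna, hnb, hnc⟩ := (ha.and (h1.and (eventually_ge_atTop 1))).exists
  have := h n hnc
  linarith

private lemma limsup_mono_aux {u v : ℕ → ℝ} {b : ℝ} (h0 : ∀ n, 0 ≤ u n) (huv : ∀ n, u n ≤ v n)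
    (hvb : ∀ n, v n ≤ b) : Filter.limsup u Filter.atTop ≤ Filter.limsup v Filter.atTop := by
  rw [Filter.limsup_eq, Filter.limsup_eq]
  refine csInf_le_csInf ?_ ⟨b, Filter.Eventually.of_forall hvb⟩ ?_
  · refine ⟨0, fun a ha => ?_⟩
    obtain ⟨n, hn⟩ := ha.exists
    exact le_trans (h0 n) hn
  · intro a ha
    exact ha.mono (fun n hn => le_trans (huv n) hn)

end LimsupAux

section SepAux

variable {Y : Type*} [MetricSpace Y]

private lemma cover_balls [CompactSpace Y] {d : ℝ} (hd : 0 < d) :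
    ∃ A : Finset Y, ∀ z : Y, ∃ a ∈ A, dist z a < d := by
  obtain ⟨t, -, htf, hcov⟩ := finite_cover_balls_of_compact (isCompact_univ (X := Y)) hd
  refine ⟨htf.toFinset, fun z => ?_⟩
  have := hcov (Set.mem_univ z)
  simp only [Set.mem_iUnion, Metric.mem_ball, exists_prop] at this
  obtain ⟨a, ha, hda⟩ := this
  exact ⟨a, htf.mem_toFinset.2 ha, hda⟩

private lemma sep_card_bound [CompactSpace Y] (T : Y → Y) {ε : ℝ} (hε : 0 < ε) :
    ∃ N : ℕ, 1 ≤ N ∧ ∀ (n : ℕ) (E : Finset Y), IsSeparated T ε n ↑E → E.card ≤ N ^ n := by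
  classical
  obtain ⟨A, hA⟩ := cover_balls (Y := Y) (half_pos hε)
  refine ⟨A.card + 1, Nat.le_add_left 1 _, fun n E hE => ?_⟩
  rcases isEmpty_or_nonempty Y with hY | hY
  · have : E = ∅ := Finset.eq_empty_of_isEmpty E
    simp [this]
  · choose c hc hcd using hA
    have hinj : Set.InjOn (fun x => fun k : Fin n => c (T^[k] x)) ↑E := by
      intro x hx y hy hxy
      by_contra hne
      obtain ⟨k, hk, hsep⟩ := hE x hx y hy hne
      have h1 := hcd (T^[k] x)
      have h2 := hcd (T^[k] y)
      have h3 : c (T^[k] x) = c (T^[k] y) := congrFun hxy ⟨k, hk⟩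
      have h4 := dist_triangle (T^[k] x) (c (T^[k] y)) (T^[k] y)
      rw [h3] at h1
      rw [dist_comm (c (T^[k] y)) (T^[k] y)] at h4
      linarith
    have hmaps : ∀ x ∈ E, (fun k : Fin n => c (T^[k] x)) ∈
        Fintype.piFinset (fun _ : Fin n => A) := by
      intro x _
      rw [Fintype.mem_piFinset]
      exact fun k => hc _
    calc E.card ≤ (Fintype.piFinset (fun _ : Fin n => A)).card :=
          Finset.card_le_card_of_injOn _ hmaps hinj
      _ = A.card ^ n := by
          rw [Fintype.card_piFinset]
          simp
      _ ≤ (A.card + 1) ^ n := Nat.pow_le_pow_left (Nat.le_succ _) n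

private lemma sep_zero_mem (T : Y → Y) (ε : ℝ) (n : ℕ) :
    (0 : ℕ) ∈ {m : ℕ | ∃ E : Finset Y, IsSeparated T ε n ↑E ∧ E.card = m} := by
  refine ⟨∅, ?_, rfl⟩
  intro x hx
  simp at hx

private lemma sep_bdd [CompactSpace Y] (T : Y → Y) {ε : ℝ} (hε : 0 < ε) (n : ℕ) :
    BddAbove {m : ℕ | ∃ E : Finset Y, IsSeparated T ε n ↑E ∧ E.card = m} := by
  obtain ⟨N, -, hN⟩ := sep_card_bound T hε
  exact ⟨N ^ n, fun m hm => by obtain ⟨E, hE, rfl⟩ := hm; exact hN n E hE⟩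

private lemma sepCount_le_pow [CompactSpace Y] (T : Y → Y) {ε : ℝ} (hε : 0 < ε) :
    ∃ N : ℕ, 1 ≤ N ∧ ∀ n, sepCount T ε n ≤ N ^ n := by
  obtain ⟨N, hN1, hN⟩ := sep_card_bound T hε
  refine ⟨N, hN1, fun n => ?_⟩
  apply csSup_le ⟨0, sep_zero_mem T ε n⟩
  rintro m ⟨E, hE, rfl⟩
  exact hN n E hE

private lemma one_le_sepCount [CompactSpace Y] [Nonempty Y] (T : Y → Y) {ε : ℝ} (hε : 0 < ε)
    (n : ℕ) : 1 ≤ sepCount T ε n := by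
  have hmem : (1 : ℕ) ∈ {m : ℕ | ∃ E : Finset Y, IsSeparated T ε n ↑E ∧ E.card = m} := by
    refine ⟨{Classical.arbitrary Y}, ?_, Finset.card_singleton _⟩
    intro x hx y hy hxy
    simp only [Finset.coe_singleton, Set.mem_singleton_iff] at hx hy
    exact absurd (hx.trans hy.symm) hxy
  exact le_csSup (sep_bdd T hε n) hmem

private lemma exists_maximal_separated [CompactSpace Y] (T : Y → Y) {ε : ℝ} (hε : 0 < ε)
    (n : ℕ) : ∃ E : Finset Y, IsSeparated T ε n ↑E ∧ E.card = sepCount T ε n ∧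
      ∀ x : Y, ∃ w ∈ E, ∀ k < n, dist (T^[k] x) (T^[k] w) ≤ ε := by
  classical
  have hmem := Nat.sSup_mem ⟨0, sep_zero_mem T ε n⟩ (sep_bdd T hε n)
  obtain ⟨E, hE, hcard⟩ := hmem
  refine ⟨E, hE, hcard, fun x => ?_⟩
  by_contra hcon
  push_neg at hcon
  have hxE : x ∉ E := by
    intro hxE
    obtain ⟨k, -, hk2⟩ := hcon x hxE
    simp at hk2
    linarith
  have hsep' : IsSeparated T ε n ↑(insert x E) := by
    intro a ha b hb hab
    simp only [Finset.coe_insert, Set.mem_insert_iff, Finset.mem_coe] at ha hb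
    rcases ha with rfl | ha
    · rcases hb with rfl | hb
      · exact absurd rfl hab
      · obtain ⟨k, hk1, hk2⟩ := hcon b hb
        exact ⟨k, hk1, hk2⟩
    · rcases hb with rfl | hb
      · obtain ⟨k, hk1, hk2⟩ := hcon a ha
        exact ⟨k, hk1, by rwa [dist_comm]⟩
      · exact hE a ha b hb hab
  have hmem2 : E.card + 1 ∈ {m : ℕ | ∃ E : Finset Y, IsSeparated T ε n ↑E ∧ E.card = m} :=
    ⟨insert x E, hsep', Finset.card_insert_of_notMem hxE⟩
  have := le_csSup (sep_bdd T hε n) hmem2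
  rw [← hcard] at this
  omega

private lemma log_sepCount_nonneg [CompactSpace Y] [Nonempty Y] (T : Y → Y) {ε : ℝ}
    (hε : 0 < ε) (n : ℕ) : 0 ≤ Real.log (sepCount T ε n) / n := by
  apply div_nonneg _ (Nat.cast_nonneg n)
  apply Real.log_nonneg
  exact_mod_cast one_le_sepCount T hε n

private lemma log_sepCount_bounded [CompactSpace Y] [Nonempty Y] (T : Y → Y) {ε : ℝ}
    (hε : 0 < ε) : ∃ b : ℝ, ∀ n : ℕ, Real.log (sepCount T ε n) / n ≤ b := by
  obtain ⟨N, hN1, hN⟩ := sepCount_le_pow T hε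
  have hNR : (1 : ℝ) ≤ (N : ℝ) := by exact_mod_cast hN1
  refine ⟨Real.log N, fun n => ?_⟩
  rcases Nat.eq_zero_or_pos n with rfl | hn
  · simpa using Real.log_nonneg hNR
  · have hpos : (0 : ℝ) < n := by exact_mod_cast hn
    rw [div_le_iff₀ hpos]
    have h1 : (0 : ℝ) < (sepCount T ε n : ℝ) := by
      exact_mod_cast one_le_sepCount T hε n
    have h2 : (sepCount T ε n : ℝ) ≤ (N : ℝ) ^ n := by exact_mod_cast hN n
    calc Real.log (sepCount T ε n) ≤ Real.log ((N : ℝ) ^ n) := Real.log_le_log h1 h2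
      _ = n * Real.log N := Real.log_pow (n := n) (x := (N:ℝ))
      _ = Real.log N * n := by ring

end SepAux

section Subsystem

variable {X : Type*} [MetricSpace X]

private lemma iterate_coe (f : X ≃ₜ X) {P : Set X} (g : P → P)
    (hg : ∀ x : P, ((g x : X)) = f (x : X)) :
    ∀ (k : ℕ) (x : P), ((g^[k] x : P) : X) = (⇑f)^[k] (x : X) := by
  intro k
  induction k with
  | zero => intro x; simp
  | succ k ih =>
      intro x
      rw [Function.iterate_succ_apply', Function.iterate_succ_apply', hg, ih]

private lemma sep_image [DecidableEq X] (f : X ≃ₜ X) {P : Set X} (g : P → P)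
    (hg : ∀ x : P, ((g x : X)) = f (x : X)) {ε : ℝ} {n : ℕ} (E : Finset P)
    (hE : IsSeparated g ε n ↑E) :
    IsSeparated (⇑f) ε n ↑(E.image (Subtype.val)) := by
  classical
  intro x hx y hy hxy
  simp only [Finset.coe_image, Set.mem_image, Finset.mem_coe] at hx hy
  obtain ⟨a, ha, rfl⟩ := hx
  obtain ⟨b, hb, rfl⟩ := hy
  have hab : a ≠ b := fun h => hxy (by rw [h])
  obtain ⟨k, hk, hsep⟩ := hE a ha b hb hab
  refine ⟨k, hk, ?_⟩
  rw [Subtype.dist_eq] at hsep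
  rwa [iterate_coe f g hg, iterate_coe f g hg] at hsep

private lemma sepCount_subsystem_le [CompactSpace X] (f : X ≃ₜ X) {P : Set X} (g : P → P)
    (hg : ∀ x : P, ((g x : X)) = f (x : X)) {ε : ℝ} (hε : 0 < ε) (n : ℕ) :
    sepCount g ε n ≤ sepCount (⇑f) ε n := by
  classical
  apply csSup_le_csSup (sep_bdd (⇑f) hε n) ⟨0, sep_zero_mem g ε n⟩
  rintro m ⟨E, hE, rfl⟩
  exact ⟨E.image Subtype.val, sep_image f g hg E hE,
    Finset.card_image_of_injective E Subtype.val_injective⟩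

end Subsystem

section Closing

variable {X : Type*} [MetricSpace X] [CompactSpace X]

private lemma shadow_one (f : X ≃ₜ X) (P : Set X) (hPc : IsClosed P) (hPne : P.Nonempty)
    (l : ℕ) {ε : ℝ} (hε : 0 < ε) :
    ∃ η : ℝ, 0 < η ∧ ∀ x : X, (∀ k < l, Metric.infDist ((⇑f)^[k] x) P < η) →
      ∃ q ∈ P, ∀ k < l, dist ((⇑f)^[k] x) ((⇑f)^[k] q) ≤ ε := by
  classical
  set W : Set X := ⋃ q ∈ P, ⋂ k ∈ Finset.range l, ((⇑f)^[k]) ⁻¹' Metric.ball ((⇑f)^[k] q) ε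
    with hW
  have hWopen : IsOpen W := by
    refine isOpen_biUnion fun q _ => ?_
    refine isOpen_biInter_finset fun k _ => ?_
    exact (Metric.isOpen_ball).preimage (f.continuous.iterate k)
  set A : ℕ → Set X := fun j => ⋂ (k : ℕ) (_ : k < l),
      (fun x => Metric.infDist ((⇑f)^[k] x) P) ⁻¹' Set.Iic (1/(j+1 : ℝ)) with hA
  have hAclosed : ∀ j, IsClosed (A j) :=
    fun j => isClosed_iInter fun k => isClosed_iInter fun _ =>
      IsClosed.preimage ((Metric.continuous_infDist_pt P).comp (f.continuous.iterate k))
        isClosed_Iic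
  have hAmem : ∀ (j : ℕ) (x : X),
      x ∈ A j ↔ ∀ k < l, Metric.infDist ((⇑f)^[k] x) P ≤ 1/(j+1 : ℝ) := by
    intro j x
    simp [hA]
  have hWmem : ∀ x : X,
      x ∈ W ↔ ∃ q ∈ P, ∀ k < l, dist ((⇑f)^[k] x) ((⇑f)^[k] q) < ε := by
    intro x
    simp [hW, Metric.mem_ball]
  have hsub : (⋂ j, A j) ⊆ W := by
    intro x hx
    rw [hWmem]
    have hmem : ∀ k < l, (⇑f)^[k] x ∈ P := by
      intro k hk
      have h1 : ∀ j : ℕ, Metric.infDist ((⇑f)^[k] x) P ≤ 1/(j+1 : ℝ) := fun j =>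
        (hAmem j x).1 (Set.mem_iInter.1 hx j) k hk
      have h0 : Metric.infDist ((⇑f)^[k] x) P = 0 := by
        by_contra hne
        have hpos : 0 < Metric.infDist ((⇑f)^[k] x) P :=
          lt_of_le_of_ne Metric.infDist_nonneg (Ne.symm hne)
        obtain ⟨j, hj⟩ := exists_nat_one_div_lt hpos
        exact absurd (h1 j) (not_le.2 hj)
      rw [← hPc.closure_eq]
      exact (Metric.mem_closure_iff_infDist_zero hPne).2 h0
    rcases Nat.eq_zero_or_pos l with hl | hl
    · obtain ⟨q, hq⟩ := hPne
      exact ⟨q, hq, fun k hk => absurd hk (by omega)⟩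
    · refine ⟨x, by simpa using hmem 0 hl, fun k hk => by simp [hε]⟩
  have hAj : ∃ j : ℕ, A j ⊆ W := by
    by_contra hcon
    push_neg at hcon
    have hne : ∀ j : ℕ, (A j ∩ Wᶜ).Nonempty := by
      intro j
      obtain ⟨x, hx1, hx2⟩ := Set.not_subset.1 (hcon j)
      exact ⟨x, hx1, hx2⟩
    have hdec : ∀ j : ℕ, A (j+1) ∩ Wᶜ ⊆ A j ∩ Wᶜ := by
      intro j x hx
      refine ⟨(hAmem j x).2 (fun k hk => le_trans ((hAmem (j+1) x).1 hx.1 k hk) ?_), hx.2⟩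
      have hja : (0:ℝ) < (j:ℝ)+1 := by positivity
      have hjb : ((j:ℝ)+1) ≤ ((j+1 : ℕ):ℝ)+1 := by push_cast; linarith
      exact one_div_le_one_div_of_le hja hjb
    have hcl : ∀ j : ℕ, IsClosed (A j ∩ Wᶜ) := fun j => (hAclosed j).inter hWopen.isClosed_compl
    have hcompact : IsCompact (A 0 ∩ Wᶜ) := (hcl 0).isCompact
    obtain ⟨x, hx⟩ :=
      IsCompact.nonempty_iInter_of_sequence_nonempty_isCompact_isClosed _ hdec hne hcompact hcl
    have hx1 : x ∈ ⋂ j, A j := Set.mem_iInter.2 fun j => (Set.mem_iInter.1 hx j).1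
    exact (Set.mem_iInter.1 hx 0).2 (hsub hx1)
  obtain ⟨j, hj⟩ := hAj
  refine ⟨1/(j+1 : ℝ), by positivity, fun x hx => ?_⟩
  have hxA : x ∈ A j := (hAmem j x).2 fun k hk => (hx k hk).le
  obtain ⟨q, hq, hd⟩ := (hWmem x).1 (hj hxA)
  exact ⟨q, hq, fun k hk => (hd k hk).le⟩

private lemma shadow_le (f : X ≃ₜ X) (P : Set X) (hPc : IsClosed P) (hPne : P.Nonempty)
    (m : ℕ) {ε : ℝ} (hε : 0 < ε) :
    ∃ η : ℝ, 0 < η ∧ ∀ l ≤ m, ∀ x : X, (∀ k < l, Metric.infDist ((⇑f)^[k] x) P < η) →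
      ∃ q ∈ P, ∀ k < l, dist ((⇑f)^[k] x) ((⇑f)^[k] q) ≤ ε := by
  induction m with
  | zero =>
      refine ⟨1, one_pos, fun l hl x _ => ?_⟩
      obtain ⟨q, hq⟩ := hPne
      exact ⟨q, hq, fun k hk => absurd hk (by omega)⟩
  | succ m ih =>
      obtain ⟨η₁, hη₁, h1⟩ := ih
      obtain ⟨η₂, hη₂, h2⟩ := shadow_one f P hPc hPne (m+1) hε
      refine ⟨min η₁ η₂, lt_min hη₁ hη₂, fun l hl x hx => ?_⟩
      rcases Nat.lt_or_ge l (m+1) with hcase | hcase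
      · exact h1 l (by omega) x fun k hk => lt_of_lt_of_le (hx k hk) (min_le_left _ _)
      · have hleq : l = m+1 := le_antisymm hl hcase
        subst hleq
        exact h2 x fun k hk => lt_of_lt_of_le (hx k hk) (min_le_right _ _)

private lemma transient (f : X ≃ₜ X)
    (hclose : ∀ ε : ℝ, 0 < ε → ∃ δ : ℝ, 0 < δ ∧ δ < ε ∧ ∀ (x : X) (n : ℕ), 1 ≤ n →
      dist x ((⇑f)^[n] x) < δ → ∃ p : X, (⇑f)^[n] p = p ∧ dist p x ≤ ε)
    (P : Set X) (hP : P = closure {p : X | ∃ n : ℕ, 1 ≤ n ∧ (⇑f)^[n] p = p})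
    {η : ℝ} (hη : 0 < η) :
    ∃ r : ℕ, ∀ (x : X) (n : ℕ),
      ((Finset.range n).filter (fun k => η ≤ Metric.infDist ((⇑f)^[k] x) P)).card ≤ r := by
  classical
  obtain ⟨δ, hδ0, hδη, hcl⟩ := hclose (η/2) (half_pos hη)
  obtain ⟨A, hA⟩ := cover_balls (Y := X) (half_pos hδ0)
  choose c hcmem hcd using hA
  refine ⟨A.card, fun x n => ?_⟩
  have key : ∀ a b : ℕ, a < b → η ≤ Metric.infDist ((⇑f)^[a] x) P →
      c ((⇑f)^[a] x) ≠ c ((⇑f)^[b] x) := by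
    intro a b hab hbad hceq
    have hba : (⇑f)^[b-a] ((⇑f)^[a] x) = (⇑f)^[b] x := by
      rw [← Function.iterate_add_apply]
      congr 1
      omega
    have hd : dist ((⇑f)^[a] x) ((⇑f)^[b-a] ((⇑f)^[a] x)) < δ := by
      rw [hba]
      have t1 := dist_triangle ((⇑f)^[a] x) (c ((⇑f)^[a] x)) ((⇑f)^[b] x)
      have t2 := hcd ((⇑f)^[a] x)
      have t3 := hcd ((⇑f)^[b] x)
      rw [hceq] at t1 t2
      rw [dist_comm ((⇑f)^[b] x) (c ((⇑f)^[b] x))] at t3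
      linarith
    obtain ⟨p, hpfix, hpd⟩ := hcl ((⇑f)^[a] x) (b-a) (by omega) hd
    have hpP : p ∈ P := by
      rw [hP]
      exact subset_closure ⟨b-a, by omega, hpfix⟩
    have h1 : Metric.infDist ((⇑f)^[a] x) P ≤ η/2 := by
      calc Metric.infDist ((⇑f)^[a] x) P ≤ dist ((⇑f)^[a] x) p :=
            Metric.infDist_le_dist_of_mem hpP
        _ = dist p ((⇑f)^[a] x) := dist_comm _ _
        _ ≤ η/2 := hpd
    linarith
  apply Finset.card_le_card_of_injOn (fun k => c ((⇑f)^[k] x)) (fun k _ => hcmem _)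
  intro k1 hk1 k2 hk2 hceq
  simp only [Finset.coe_filter, Set.mem_setOf_eq, Finset.mem_range] at hk1 hk2
  by_contra hne
  rcases Nat.lt_or_ge k1 k2 with h | h
  · exact key k1 k2 h hk1.2 hceq
  · exact key k2 k1 (by omega) hk2.2 hceq.symm

private lemma per_nonempty [Nonempty X] (f : X ≃ₜ X)
    (hclose : ∀ ε : ℝ, 0 < ε → ∃ δ : ℝ, 0 < δ ∧ δ < ε ∧ ∀ (x : X) (n : ℕ), 1 ≤ n →
      dist x ((⇑f)^[n] x) < δ → ∃ p : X, (⇑f)^[n] p = p ∧ dist p x ≤ ε) :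
    ∃ p : X, ∃ n : ℕ, 1 ≤ n ∧ (⇑f)^[n] p = p := by
  classical
  obtain ⟨δ, hδ0, -, hcl⟩ := hclose 1 one_pos
  obtain ⟨A, hA⟩ := cover_balls (Y := X) (half_pos hδ0)
  choose c hcmem hcd using hA
  set x₀ := Classical.arbitrary X with hx₀
  have key : ∀ a b : ℕ, a < b → c ((⇑f)^[a] x₀) = c ((⇑f)^[b] x₀) →
      ∃ p : X, ∃ n : ℕ, 1 ≤ n ∧ (⇑f)^[n] p = p := by
    intro a b hab hceq
    have hba : (⇑f)^[b-a] ((⇑f)^[a] x₀) = (⇑f)^[b] x₀ := by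
      rw [← Function.iterate_add_apply]
      congr 1
      omega
    have hd : dist ((⇑f)^[a] x₀) ((⇑f)^[b-a] ((⇑f)^[a] x₀)) < δ := by
      rw [hba]
      have t1 := dist_triangle ((⇑f)^[a] x₀) (c ((⇑f)^[a] x₀)) ((⇑f)^[b] x₀)
      have t2 := hcd ((⇑f)^[a] x₀)
      have t3 := hcd ((⇑f)^[b] x₀)
      rw [hceq] at t1 t2
      rw [dist_comm ((⇑f)^[b] x₀) (c ((⇑f)^[b] x₀))] at t3
      linarith
    obtain ⟨p, hpfix, -⟩ := hcl ((⇑f)^[a] x₀) (b-a) (by omega) hd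
    exact ⟨p, b-a, by omega, hpfix⟩
  obtain ⟨i, j, hij, heq⟩ :=
    Finite.exists_ne_map_eq_of_infinite
      (fun k : ℕ => (⟨c ((⇑f)^[k] x₀), hcmem _⟩ : {a // a ∈ A}))
  have heq' : c ((⇑f)^[i] x₀) = c ((⇑f)^[j] x₀) := congrArg Subtype.val heq
  rcases Nat.lt_or_ge i j with h | h
  · exact key i j h heq'
  · exact key j i (by omega) heq'.symm

end Closing


section MainCount

variable {X : Type*} [MetricSpace X] [CompactSpace X]

private lemma main_count [Nonempty X] (f : X ≃ₜ X)
    (hclose : ∀ ε : ℝ, 0 < ε → ∃ δ : ℝ, 0 < δ ∧ δ < ε ∧ ∀ (x : X) (n : ℕ), 1 ≤ n →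
      dist x ((⇑f)^[n] x) < δ → ∃ p : X, (⇑f)^[n] p = p ∧ dist p x ≤ ε)
    (P : Set X) (hP : P = closure {p : X | ∃ n : ℕ, 1 ≤ n ∧ (⇑f)^[n] p = p})
    (g : P → P) (hg : ∀ x : P, ((g x : X)) = f (x : X))
    {ε : ℝ} (hε : 0 < ε) (m : ℕ) (hm : 1 ≤ m) :
    ∃ C : ℕ, 1 ≤ C ∧ ∀ n : ℕ,
      sepCount (⇑f) (5*ε) n ≤ C * (2 * (sepCount g ε m + 1)) ^ (n / m + 1) := by
  classical
  have hPc : IsClosed P := hP ▸ isClosed_closure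
  haveI : CompactSpace P := isCompact_iff_compactSpace.mp hPc.isCompact
  obtain ⟨p₀, n₀, hn₀, hfix₀⟩ := per_nonempty f hclose
  have hp₀P : p₀ ∈ P := hP ▸ subset_closure ⟨n₀, hn₀, hfix₀⟩
  haveI : Nonempty P := ⟨⟨p₀, hp₀P⟩⟩
  obtain ⟨η, hη, hshadow⟩ := shadow_le f P hPc ⟨p₀, hp₀P⟩ m hε
  obtain ⟨r, htrans⟩ := transient f hclose P hP hη
  obtain ⟨EX, -, -, hEXspan⟩ := exists_maximal_separated (⇑f) hε m
  obtain ⟨FP, -, hFPcard, hFPspan⟩ := exists_maximal_separated g hε m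
  choose wX hwXmem hwXspan using hEXspan
  choose wP hwPmem hwPspan using hFPspan
  refine ⟨(EX.card + 1) ^ r, Nat.one_le_pow _ _ (Nat.succ_pos _), fun n => ?_⟩
  -- block structure
  set nb := n / m + 1 with hnb
  set len : ℕ → ℕ := fun j => min ((j+1)*m) n - j*m with hlen
  have hlenle : ∀ j : ℕ, len j ≤ m := by
    intro j
    have h1 : min ((j+1)*m) n ≤ (j+1)*m := min_le_left _ _
    have h2 : (j+1)*m = j*m + m := by ring
    simp only [hlen]
    omega
  set dirty : X → Fin nb → Prop :=
    fun x j => ∃ k', k' < len j.1 ∧ η ≤ Metric.infDist ((⇑f)^[j.1*m + k'] x) P with hdirty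
  set D : X → Finset (Fin nb) := fun x => Finset.univ.filter (fun j => dirty x j) with hDdef
  have hDmem : ∀ (x : X) (j : Fin nb), j ∈ D x ↔ dirty x j := by
    intro x j
    simp [hDdef]
  have hDcard : ∀ x : X, (D x).card ≤ r := by
    intro x
    have hle := htrans x n
    refine le_trans (Finset.card_le_card_of_injOn
      (fun j' : Fin nb => if h : dirty x j' then j'.1*m + Classical.choose h else 0)
      ?_ ?_) hle
    · intro j hj
      have hdj : dirty x j := (hDmem x j).1 hj
      simp only [dif_pos hdj]
      obtain ⟨hlt, hbadw⟩ := Classical.choose_spec hdj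
      refine Finset.mem_filter.2 ⟨Finset.mem_range.2 ?_, hbadw⟩
      have h1 : min ((j.1+1)*m) n ≤ n := min_le_right _ _
      simp only [hlen] at hlt
      omega
    · intro j1 hj1 j2 hj2 heq
      have hd1 : dirty x j1 := (hDmem x j1).1 (Finset.mem_coe.1 hj1)
      have hd2 : dirty x j2 := (hDmem x j2).1 (Finset.mem_coe.1 hj2)
      simp only [dif_pos hd1, dif_pos hd2] at heq
      have hc1 : Classical.choose hd1 < m :=
        lt_of_lt_of_le (Classical.choose_spec hd1).1 (hlenle _)
      have hc2 : Classical.choose hd2 < m :=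
        lt_of_lt_of_le (Classical.choose_spec hd2).1 (hlenle _)
      apply Fin.ext
      by_contra hne
      rcases Nat.lt_or_ge j1.1 j2.1 with h | h
      · have hmul : (j1.1+1) * m ≤ j2.1*m := Nat.mul_le_mul_right m h
        have hsm : (j1.1+1)*m = j1.1*m + m := by ring
        omega
      · have h' : j2.1 < j1.1 := by omega
        have hmul : (j2.1+1) * m ≤ j1.1*m := Nat.mul_le_mul_right m h'
        have hsm : (j2.1+1)*m = j2.1*m + m := by ring
        omega
  -- shadowing of clean blocks
  have hclean : ∀ (x : X) (j : Fin nb), ¬ dirty x j →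
      ∃ q : P, ∀ k < len j.1, dist ((⇑f)^[j.1*m + k] x) ((⇑f)^[k] (q : X)) ≤ ε := by
    intro x j hnd
    simp only [hdirty] at hnd
    push_neg at hnd
    have hyp : ∀ k < len j.1, Metric.infDist ((⇑f)^[k] ((⇑f)^[j.1*m] x)) P < η := by
      intro k hk
      have h := hnd k hk
      rwa [Nat.add_comm (j.1*m) k, Function.iterate_add_apply] at h
    obtain ⟨q, hqP, hq⟩ := hshadow (len j.1) (hlenle j.1) ((⇑f)^[j.1*m] x) hyp
    refine ⟨⟨q, hqP⟩, fun k hk => ?_⟩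
    have h := hq k hk
    rwa [← Function.iterate_add_apply, Nat.add_comm k (j.1*m)] at h
  choose qc hqc using hclean
  -- the coding map
  set Φ : X → (Fin nb → Bool) × (Fin r → Option {a // a ∈ EX}) ×
      (Fin nb → Option {a // a ∈ FP}) :=
    fun x => (fun j => decide (dirty x j),
      fun i => if h : (i : ℕ) < ((D x).sort (· ≤ ·)).length
        then some ⟨wX ((⇑f)^[(((D x).sort (· ≤ ·)).get ⟨i, h⟩).1 * m] x), hwXmem _⟩ else none,
      fun j => if h : dirty x j then none else some ⟨wP (qc x j h), hwPmem _⟩) with hΦ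
  have hmain : ∀ E : Finset X, IsSeparated (⇑f) (5*ε) n ↑E →
      E.card ≤ (EX.card + 1)^r * (2 * (FP.card + 1)) ^ nb := by
    intro E hE
    have hinj : Set.InjOn Φ ↑E := by
      intro x hx y hy hxy
      by_contra hne
      obtain ⟨k, hkn, hsep⟩ := hE x hx y hy hne
      simp only [hΦ, Prod.mk.injEq] at hxy
      obtain ⟨h1, h2, h3⟩ := hxy
      have hdirty_iff : ∀ j, dirty x j ↔ dirty y j :=
        fun j => decide_eq_decide.1 (congrFun h1 j)
      have hDeq : D x = D y := by
        simp only [hDdef]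
        apply Finset.filter_congr
        intro j _
        exact hdirty_iff j
      -- locate the separation time in a block
      have hj0nb : k/m < nb := by
        have h1 : k/m ≤ n/m := Nat.div_le_div_right hkn.le
        omega
      have hsplitN : (k/m)*m + k%m = k := by
        rw [Nat.mul_comm]
        exact Nat.div_add_mod k m
      have hk'mN : k % m < m := Nat.mod_lt _ hm
      have hlt1 : k < (k/m + 1)*m := by
        calc k = (k/m)*m + k%m := hsplitN.symm
          _ < (k/m)*m + m := Nat.add_lt_add_left hk'mN _
          _ = (k/m+1)*m := (Nat.succ_mul _ _).symm
      have hk'lenN : k % m < len (k/m) := by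
        have hb2 : k < min ((k/m+1)*m) n := lt_min hlt1 hkn
        simp only [hlen]
        apply Nat.lt_sub_of_add_lt
        rw [Nat.add_comm, hsplitN]
        exact hb2
      set j : Fin nb := ⟨k/m, hj0nb⟩ with hjdef
      have hk'm : k % m < m := hk'mN
      have hsplit : j.1*m + k % m = k := hsplitN
      have hk'len : k % m < len j.1 := hk'lenN
      have hadd : k % m + j.1*m = k := by
        rw [Nat.add_comm]
        exact hsplit
      set k' := k % m with hk'def
      have hiter_split : ∀ z : X, (⇑f)^[k] z = (⇑f)^[k'] ((⇑f)^[j.1*m] z) := by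
        intro z
        conv_lhs => rw [← hadd]
        rw [Function.iterate_add_apply]
      by_cases hd : dirty x j
      · -- dirty block: use the X-spanning labels
        have hjD : j ∈ D x := (hDmem x j).2 hd
        have hjsort : j ∈ (D x).sort (· ≤ ·) := (Finset.mem_sort _).2 hjD
        obtain ⟨i, hi⟩ := List.mem_iff_get.1 hjsort
        have hlenr : ((D x).sort (· ≤ ·)).length ≤ r := by
          rw [Finset.length_sort]
          exact hDcard x
        have hir : (i : ℕ) < r := lt_of_lt_of_le i.2 hlenr
        have h2i := congrFun h2 ⟨i.1, hir⟩
        rw [← hDeq] at h2i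
        split_ifs at h2i with hcc
        · simp only [Option.some.injEq, Subtype.mk.injEq] at h2i
          have hgot : ((D x).sort (· ≤ ·)).get ⟨(⟨i.1, hir⟩ : Fin r).1, hcc⟩ = j := by
            have hix : (⟨(⟨i.1, hir⟩ : Fin r).1, hcc⟩ : Fin (((D x).sort (· ≤ ·)).length)) = i :=
              Fin.ext rfl
            rw [hix, hi]
          rw [hgot] at h2i
          -- h2i : wX ((⇑f)^[j.1*m] x) = wX ((⇑f)^[j.1*m] y)
          have hx1 := hwXspan ((⇑f)^[j.1*m] x) k' hk'm
          have hy1 := hwXspan ((⇑f)^[j.1*m] y) k' hk'm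
          rw [h2i] at hx1
          rw [← hiter_split x] at hx1
          rw [← hiter_split y] at hy1
          have t1 := dist_triangle ((⇑f)^[k] x) ((⇑f)^[k'] (wX ((⇑f)^[j.1*m] y))) ((⇑f)^[k] y)
          have e1 := dist_comm ((⇑f)^[k] y) ((⇑f)^[k'] (wX ((⇑f)^[j.1*m] y)))
          linarith
        · exact hcc i.2
      · -- clean block: use the P-spanning labels
        have hdy : ¬ dirty y j := fun hdy => hd ((hdirty_iff j).2 hdy)
        have h3j := congrFun h3 j
        rw [dif_neg hd, dif_neg hdy] at h3j
        simp only [Option.some.injEq, Subtype.mk.injEq] at h3j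
        -- h3j : wP (qc x j hd) = wP (qc y j hdy)
        have hqx := hqc x j hd k' hk'len
        have hqy := hqc y j hdy k' hk'len
        have hspx := hwPspan (qc x j hd) k' hk'm
        have hspy := hwPspan (qc y j hdy) k' hk'm
        rw [Subtype.dist_eq, iterate_coe f g hg, iterate_coe f g hg] at hspx hspy
        rw [h3j] at hspx
        rw [hsplit] at hqx hqy
        have t1 := dist_triangle ((⇑f)^[k] x) ((⇑f)^[k'] ((qc x j hd : P) : X)) ((⇑f)^[k] y)
        have t2 := dist_triangle ((⇑f)^[k'] ((qc x j hd : P) : X))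
          ((⇑f)^[k'] ((wP (qc y j hdy) : P) : X)) ((⇑f)^[k] y)
        have t3 := dist_triangle ((⇑f)^[k'] ((wP (qc y j hdy) : P) : X))
          ((⇑f)^[k'] ((qc y j hdy : P) : X)) ((⇑f)^[k] y)
        have e1 := dist_comm ((⇑f)^[k'] ((wP (qc y j hdy) : P) : X))
          ((⇑f)^[k'] ((qc y j hdy : P) : X))
        have e2 := dist_comm ((⇑f)^[k] y) ((⇑f)^[k'] ((qc y j hdy : P) : X))
        linarith
    have hcard := Finset.card_le_card_of_injOn Φ (fun a _ => Finset.mem_univ (Φ a)) hinj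
    rw [Finset.card_univ] at hcard
    have hLcard : Fintype.card ((Fin nb → Bool) × (Fin r → Option {a // a ∈ EX}) ×
        (Fin nb → Option {a // a ∈ FP})) = 2^nb * ((EX.card + 1)^r * (FP.card + 1)^nb) := by
      simp only [Fintype.card_prod, Fintype.card_fun, Fintype.card_option, Fintype.card_coe,
        Fintype.card_fin, Fintype.card_bool]
    rw [hLcard] at hcard
    calc E.card ≤ 2^nb * ((EX.card + 1)^r * (FP.card + 1)^nb) := hcard
      _ = (EX.card + 1)^r * (2 * (FP.card + 1)) ^ nb := by rw [mul_pow]; ring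
  unfold sepCount
  apply csSup_le ⟨0, sep_zero_mem (⇑f) (5*ε) n⟩
  rintro m' ⟨E, hEsep, rfl⟩
  have h := hmain E hEsep
  rwa [hFPcard] at h

end MainCount

section HardEasy

variable {X : Type*} [MetricSpace X] [CompactSpace X]

private lemma hard [Nonempty X] (f : X ≃ₜ X)
    (hclose : ∀ ε : ℝ, 0 < ε → ∃ δ : ℝ, 0 < δ ∧ δ < ε ∧ ∀ (x : X) (n : ℕ), 1 ≤ n →
      dist x ((⇑f)^[n] x) < δ → ∃ p : X, (⇑f)^[n] p = p ∧ dist p x ≤ ε)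
    (P : Set X) (hP : P = closure {p : X | ∃ n : ℕ, 1 ≤ n ∧ (⇑f)^[n] p = p})
    (g : P → P) (hg : ∀ x : P, ((g x : X)) = f (x : X))
    {ε : ℝ} (hε : 0 < ε) :
    entSep (⇑f) (5*ε) ≤ entSep g ε := by
  classical
  have hPc : IsClosed P := hP ▸ isClosed_closure
  haveI : CompactSpace P := isCompact_iff_compactSpace.mp hPc.isCompact
  obtain ⟨p₀, n₀, hn₀, hfix₀⟩ := per_nonempty f hclose
  haveI : Nonempty P := ⟨⟨p₀, hP ▸ subset_closure ⟨n₀, hn₀, hfix₀⟩⟩⟩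
  have h5ε : (0:ℝ) < 5*ε := by linarith
  have key : ∀ mm : ℕ, 1 ≤ mm →
      entSep (⇑f) (5*ε) ≤ Real.log ((2 * (sepCount g ε mm + 1) : ℕ) : ℝ) / mm := by
    intro mm hmm
    obtain ⟨C, hC1, hcount⟩ := main_count f hclose P hP g hg hε mm hmm
    set B : ℕ := 2 * (sepCount g ε mm + 1) with hB
    have hBR : (1:ℝ) ≤ (B:ℝ) := by exact_mod_cast (by omega : 1 ≤ B)
    have hlogB : 0 ≤ Real.log B := Real.log_nonneg hBR
    have hCR : (1:ℝ) ≤ (C:ℝ) := by exact_mod_cast hC1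
    have hlogC : 0 ≤ Real.log C := Real.log_nonneg hCR
    have hmpos : (0:ℝ) < (mm:ℝ) := by exact_mod_cast hmm
    show Filter.limsup (fun n : ℕ => Real.log (sepCount (⇑f) (5*ε) n) / n) Filter.atTop
        ≤ Real.log (B:ℝ) / (mm:ℝ)
    refine limsup_le_aux (K := Real.log C + Real.log B)
      (fun n => log_sepCount_nonneg (⇑f) h5ε n) ?_
    intro n hn
    have hpos : (0:ℝ) < (n:ℝ) := by exact_mod_cast hn
    have hbnd : (sepCount (⇑f) (5*ε) n : ℝ) ≤ (C:ℝ) * (B:ℝ)^(n/mm+1) := by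
      exact_mod_cast hcount n
    have hsc1 : (1:ℝ) ≤ (sepCount (⇑f) (5*ε) n : ℝ) := by
      exact_mod_cast one_le_sepCount (⇑f) h5ε n
    have hlog1 : Real.log (sepCount (⇑f) (5*ε) n) ≤
        Real.log C + ((n/mm+1 : ℕ):ℝ) * Real.log B := by
      calc Real.log (sepCount (⇑f) (5*ε) n) ≤ Real.log ((C:ℝ) * (B:ℝ)^(n/mm+1)) :=
            Real.log_le_log (by linarith) hbnd
        _ = Real.log C + Real.log ((B:ℝ)^(n/mm+1)) := by
            rw [Real.log_mul (by linarith) (by positivity)]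
        _ = Real.log C + ((n/mm+1 : ℕ):ℝ) * Real.log B := by
            rw [Real.log_pow]
    have hc2 : ((n/mm+1 : ℕ):ℝ) ≤ (n:ℝ)/(mm:ℝ) + 1 := by
      push_cast
      have h := Nat.cast_div_le (α := ℝ) (m := n) (n := mm)
      linarith
    have hmul := mul_le_mul_of_nonneg_right hc2 hlogB
    rw [div_le_iff₀ hpos]
    have hexp : (Real.log B/mm + (Real.log C + Real.log B)/n) * n
        = Real.log B * n / mm + (Real.log C + Real.log B) := by
      field_simp
    rw [hexp]
    have h3 : ((n:ℝ)/(mm:ℝ) + 1) * Real.log B = Real.log B * n/mm + Real.log B := by ring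
    linarith
  obtain ⟨b, hbd⟩ := log_sepCount_bounded g hε
  show entSep (⇑f) (5*ε) ≤
    Filter.limsup (fun n : ℕ => Real.log (sepCount g ε n) / n) Filter.atTop
  refine le_limsup_aux (β := Real.log 4) hbd ?_
  intro mm hmm
  have h1 := key mm hmm
  have hM1 : 1 ≤ sepCount g ε mm := one_le_sepCount g hε mm
  have hMR : (1:ℝ) ≤ (sepCount g ε mm : ℝ) := by exact_mod_cast hM1
  have hmpos : (0:ℝ) < (mm:ℝ) := by exact_mod_cast hmm
  have h2 : ((2 * (sepCount g ε mm + 1) : ℕ) : ℝ) ≤ 4 * (sepCount g ε mm : ℝ) := by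
    push_cast
    linarith
  have hpos2 : (0:ℝ) < ((2 * (sepCount g ε mm + 1) : ℕ) : ℝ) := by
    push_cast
    linarith
  have h3 : Real.log ((2 * (sepCount g ε mm + 1) : ℕ) : ℝ) ≤
      Real.log 4 + Real.log (sepCount g ε mm) := by
    calc Real.log ((2 * (sepCount g ε mm + 1) : ℕ) : ℝ)
        ≤ Real.log (4 * (sepCount g ε mm : ℝ)) := Real.log_le_log hpos2 h2
      _ = Real.log 4 + Real.log (sepCount g ε mm) :=
          Real.log_mul (by norm_num) (by linarith)
  have h4 : Real.log ((2 * (sepCount g ε mm + 1) : ℕ) : ℝ) / mm ≤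
      (Real.log 4 + Real.log (sepCount g ε mm)) / mm :=
    (div_le_div_iff_of_pos_right hmpos).mpr h3
  have h5 : (Real.log 4 + Real.log (sepCount g ε mm)) / mm
      = Real.log (sepCount g ε mm) / mm + Real.log 4 / mm := by ring
  linarith

private lemma easy [Nonempty X] (f : X ≃ₜ X) {P : Set X} (g : P → P)
    (hg : ∀ x : P, ((g x : X)) = f (x : X)) (hPc : IsClosed P) (hPn : P.Nonempty)
    {e : ℝ} (he : 0 < e) : entSep g e ≤ entSep (⇑f) e := by
  classical
  haveI : CompactSpace P := isCompact_iff_compactSpace.mp hPc.isCompact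
  haveI : Nonempty P := hPn.to_subtype
  obtain ⟨b, hbd⟩ := log_sepCount_bounded (⇑f) he
  show Filter.limsup (fun n : ℕ => Real.log (sepCount g e n) / n) Filter.atTop ≤
    Filter.limsup (fun n : ℕ => Real.log (sepCount (⇑f) e n) / n) Filter.atTop
  refine limsup_mono_aux (fun n => log_sepCount_nonneg g he n) ?_ hbd
  intro n
  rcases Nat.eq_zero_or_pos n with rfl | hn
  · simp
  · have hpos : (0:ℝ) < (n:ℝ) := by exact_mod_cast hn
    have h1 : (0:ℝ) < (sepCount g e n : ℝ) := by
      have := one_le_sepCount g he n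
      exact_mod_cast Nat.lt_of_lt_of_le Nat.zero_lt_one this
    have h2 : Real.log (sepCount g e n) ≤ Real.log (sepCount (⇑f) e n) :=
      Real.log_le_log h1 (by exact_mod_cast sepCount_subsystem_le f g hg he n)
    exact (div_le_div_iff_of_pos_right hpos).mpr h2

private lemma topEnt_of_isEmpty {Y : Type*} [MetricSpace Y] [IsEmpty Y] (T : Y → Y) :
    topEnt T = 0 := by
  have hsep : ∀ (ε : ℝ) (n : ℕ), sepCount T ε n = 0 := by
    intro ε n
    unfold sepCount
    have hset : {m : ℕ | ∃ E : Finset Y, IsSeparated T ε n ↑E ∧ E.card = m} = {0} := by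
      ext m
      simp only [Set.mem_setOf_eq, Set.mem_singleton_iff]
      constructor
      · rintro ⟨E, -, rfl⟩
        simp [Finset.eq_empty_of_isEmpty E]
      · rintro rfl
        exact sep_zero_mem T ε n
    rw [hset, csSup_singleton]
  have hent : ∀ ε : ℝ, entSep T ε = 0 := by
    intro ε
    unfold entSep
    have hfun : (fun n : ℕ => Real.log (sepCount T ε n) / n) = fun _ => 0 := by
      funext n
      rw [hsep]
      simp
    rw [hfun]
    exact limsup_const 0
  unfold topEnt
  haveI : Nonempty {e : ℝ // 0 < e} := ⟨⟨1, one_pos⟩⟩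
  simp only [hent]
  exact ciSup_const

end HardEasy

/-- With the closing property, `h_top(f)` equals the entropy of the restriction of `f`
to the closure of the set of periodic points. -/
theorem stmt4 {X : Type*} [MetricSpace X] [CompactSpace X] (f : X ≃ₜ X)
    (hclose : ∀ ε : ℝ, 0 < ε → ∃ δ : ℝ, 0 < δ ∧ δ < ε ∧ ∀ (x : X) (n : ℕ), 1 ≤ n →
      dist x ((⇑f)^[n] x) < δ → ∃ p : X, (⇑f)^[n] p = p ∧ dist p x ≤ ε)
    (P : Set X) (hP : P = closure {p : X | ∃ n : ℕ, 1 ≤ n ∧ (⇑f)^[n] p = p})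
    (g : P → P) (hg : ∀ x : P, ((g x : X)) = f (x : X)) :
    topEnt ⇑f = topEnt g := by
  classical
  rcases isEmpty_or_nonempty X with hX | hX
  · haveI : IsEmpty P := ⟨fun x => hX.false x.1⟩
    rw [topEnt_of_isEmpty, topEnt_of_isEmpty]
  · have hPc : IsClosed P := hP ▸ isClosed_closure
    haveI : CompactSpace P := isCompact_iff_compactSpace.mp hPc.isCompact
    obtain ⟨p₀, n₀, hn₀, hfix₀⟩ := per_nonempty f hclose
    have hp₀ : p₀ ∈ P := hP ▸ subset_closure ⟨n₀, hn₀, hfix₀⟩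
    haveI : Nonempty P := ⟨⟨p₀, hp₀⟩⟩
    haveI : Nonempty {e : ℝ // 0 < e} := ⟨⟨1, one_pos⟩⟩
    have heasy : ∀ e : ℝ, 0 < e → entSep g e ≤ entSep (⇑f) e :=
      fun e he => easy f g hg hPc ⟨p₀, hp₀⟩ he
    have hhard : ∀ e : ℝ, 0 < e → entSep (⇑f) e ≤ entSep g (e/5) := by
      intro e he
      have h5 : 5 * (e/5) = e := by ring
      have h := hard f hclose P hP g hg (ε := e/5) (by linarith)
      rwa [h5] at h
    unfold topEnt
    by_cases hb : BddAbove (Set.range fun ε : {e : ℝ // 0 < e} => entSep (⇑f) ε.1)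
    · have hbg : BddAbove (Set.range fun ε : {e : ℝ // 0 < e} => entSep g ε.1) := by
        obtain ⟨c, hc⟩ := hb
        refine ⟨c, ?_⟩
        rintro y ⟨⟨e, he⟩, rfl⟩
        exact le_trans (heasy e he) (hc ⟨⟨e, he⟩, rfl⟩)
      apply le_antisymm
      · apply ciSup_le
        rintro ⟨e, he⟩
        exact le_trans (hhard e he) (le_ciSup hbg (⟨e/5, by linarith⟩ : {e : ℝ // 0 < e}))
      · apply ciSup_le
        rintro ⟨e, he⟩
        exact le_trans (heasy e he) (le_ciSup hb ⟨e, he⟩)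
    · have hbg : ¬ BddAbove (Set.range fun ε : {e : ℝ // 0 < e} => entSep g ε.1) := by
        intro hbg
        apply hb
        obtain ⟨c, hc⟩ := hbg
        refine ⟨c, ?_⟩
        rintro y ⟨⟨e, he⟩, rfl⟩
        exact le_trans (hhard e he)
          (hc ⟨(⟨e/5, by linarith⟩ : {e : ℝ // 0 < e}), rfl⟩)
      rw [Real.iSup_of_not_bddAbove hb, Real.iSup_of_not_bddAbove hbg]
end

section
/- Let (X,d) be a compact metric space and f : X → X an expansive homeomorphism with expansiveness constant η. Then the growth rate of periodic points satisfies limsup_{n→∞} (1/n) log card(Fix(f^n)) ≤ h_top(f). -/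
open Filter Topology MeasureTheory

section Aux

variable {X : Type*} [MetricSpace X]

lemma log_nat_nonneg (k : ℕ) : 0 ≤ Real.log k := by
  rcases Nat.eq_zero_or_pos k with h | h
  · simp [h]
  · exact Real.log_nonneg (by exact_mod_cast h)

lemma log_nat_mono {k l : ℕ} (h : k ≤ l) : Real.log k ≤ Real.log l := by
  rcases Nat.eq_zero_or_pos k with h0 | h0
  · simpa [h0] using log_nat_nonneg l
  · exact Real.log_le_log (by exact_mod_cast h0) (by exact_mod_cast h)

lemma isSeparated_empty (f : X → X) (ε : ℝ) (n : ℕ) :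
    IsSeparated f ε n (↑(∅ : Finset X)) := by
  intro x hx
  simp at hx

lemma sep_finite_ncard (f : X → X) {η : ℝ} {n : ℕ} (S : Finset X)
    (hS : ∀ x : X, ∃ s ∈ S, dist x s < η / 2) {A : Set X}
    (hA : IsSeparated f η n A) : A.Finite ∧ A.ncard ≤ S.card ^ n := by
  choose c hc hc2 using hS
  set φ : X → (Fin n → ↥S) := fun x k => ⟨c (f^[k.1] x), hc _⟩ with hφ
  have hinj : Set.InjOn φ A := by
    intro x hx y hy hxy
    by_contra hne
    obtain ⟨k, hk, hd⟩ := hA x hx y hy hne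
    have h1 : c (f^[k] x) = c (f^[k] y) := by
      have h2 := congrFun hxy ⟨k, hk⟩
      simpa [hφ] using congrArg Subtype.val h2
    have t1 : dist (f^[k] x) (f^[k] y)
        ≤ dist (f^[k] x) (c (f^[k] x)) + dist (c (f^[k] x)) (f^[k] y) :=
      dist_triangle _ _ _
    have t2 : dist (c (f^[k] x)) (f^[k] y) = dist (f^[k] y) (c (f^[k] y)) := by
      rw [h1, dist_comm]
    have t3 := hc2 (f^[k] x)
    have t4 := hc2 (f^[k] y)
    linarith
  have hfin : A.Finite := Set.Finite.of_finite_image (Set.toFinite (φ '' A)) hinj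
  refine ⟨hfin, ?_⟩
  calc A.ncard = (φ '' A).ncard := (Set.ncard_image_of_injOn hinj).symm
    _ ≤ Nat.card (Fin n → ↥S) := by
        simpa [Set.ncard_univ] using
          Set.ncard_le_ncard (Set.subset_univ (φ '' A)) Set.finite_univ
    _ = S.card ^ n := by
        simp [Nat.card_eq_fintype_card, Fintype.card_fun]

lemma exists_net [CompactSpace X] {δ : ℝ} (hδ : 0 < δ) :
    ∃ S : Finset X, ∀ x : X, ∃ s ∈ S, dist x s < δ := by
  obtain ⟨t, ht⟩ := isCompact_univ.elim_finite_subcover (fun x : X => Metric.ball x δ)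
    (fun x => Metric.isOpen_ball)
    (fun x _ => Set.mem_iUnion.mpr ⟨x, Metric.mem_ball_self hδ⟩)
  refine ⟨t, fun x => ?_⟩
  obtain ⟨s, hs, hd⟩ := Set.mem_iUnion₂.mp (ht (Set.mem_univ x))
  exact ⟨s, hs, hd⟩

variable (f : X ≃ₜ X)

lemma iter_symm_iter (m : ℕ) (x : X) : (⇑f)^[m] ((⇑f.symm)^[m] x) = x :=
  (Function.LeftInverse.iterate f.apply_symm_apply m) x

lemma iter_comm (k m : ℕ) (z : X) :
    (⇑f)^[k] ((⇑f.symm)^[m] z) = (⇑f.symm)^[m] ((⇑f)^[k] z) := by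
  have hc : Function.Commute ⇑f ⇑f.symm := fun z => by simp
  exact (hc.iterate_iterate k m) z

lemma iter_mod (n : ℕ) (x : X) (hx : (⇑f)^[n] x = x) (q : ℕ) :
    (⇑f)^[q] x = (⇑f)^[q % n] x := by
  conv_lhs => rw [← Nat.mod_add_div q n]
  rw [Function.iterate_add_apply, Function.iterate_mul, Function.iterate_fixed hx]

lemma symm_iter_eq (n : ℕ) (hn : 1 ≤ n) (x : X) (hx : (⇑f)^[n] x = x) (m : ℕ) :
    (⇑f.symm)^[m] x = (⇑f)^[(m * (n - 1)) % n] x := by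
  have hinj : Function.Injective ((⇑f)^[m]) := f.injective.iterate m
  apply hinj
  rw [iter_symm_iter, ← iter_mod f n x hx (m * (n - 1)), ← Function.iterate_add_apply]
  have h1 : m + m * (n - 1) = n * m := by
    rcases n with _ | k
    · omega
    · simp [Nat.succ_sub_one]; ring
  rw [h1, Function.iterate_mul, Function.iterate_fixed hx]

lemma fix_isSeparated {η : ℝ}
    (hexp : ∀ x y : X,
      (∀ n : ℕ, dist ((⇑f)^[n] x) ((⇑f)^[n] y) ≤ η ∧
        dist ((⇑f.symm)^[n] x) ((⇑f.symm)^[n] y) ≤ η) → x = y)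
    (n : ℕ) (hn : 1 ≤ n) :
    IsSeparated ⇑f η n {x : X | (⇑f)^[n] x = x} := by
  intro x hx y hy hne
  have h := mt (hexp x y) hne
  push_neg at h
  obtain ⟨m, hm⟩ := h
  rcases le_or_gt (dist ((⇑f)^[m] x) ((⇑f)^[m] y)) η with h1 | h1
  · have hd := hm h1
    refine ⟨(m * (n - 1)) % n, Nat.mod_lt _ (by omega), ?_⟩
    rw [← symm_iter_eq f n hn x hx m, ← symm_iter_eq f n hn y hy m]
    exact hd
  · refine ⟨m % n, Nat.mod_lt _ (by omega), ?_⟩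
    rw [← iter_mod f n x hx m, ← iter_mod f n y hy m]
    exact h1

lemma unif_exp [CompactSpace X] {η : ℝ}
    (hexp : ∀ x y : X,
      (∀ n : ℕ, dist ((⇑f)^[n] x) ((⇑f)^[n] y) ≤ η ∧
        dist ((⇑f.symm)^[n] x) ((⇑f.symm)^[n] y) ≤ η) → x = y)
    {ε : ℝ} (hε : 0 < ε) :
    ∃ m : ℕ, ∀ x y : X, ε < dist x y →
      ∃ j ≤ 2 * m, η < dist ((⇑f)^[j] ((⇑f.symm)^[m] x)) ((⇑f)^[j] ((⇑f.symm)^[m] y)) := by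
  set U : ℕ → Set (X × X) := fun m =>
    {p | ∃ j ≤ 2 * m, η < dist ((⇑f)^[j] ((⇑f.symm)^[m] p.1)) ((⇑f)^[j] ((⇑f.symm)^[m] p.2))}
    with hU
  have hUopen : ∀ m, IsOpen (U m) := by
    intro m
    have h1 : U m = ⋃ j ∈ Finset.range (2 * m + 1),
        {p : X × X | η < dist ((⇑f)^[j] ((⇑f.symm)^[m] p.1)) ((⇑f)^[j] ((⇑f.symm)^[m] p.2))} := by
      ext p
      simp [hU, Nat.lt_succ_iff]
    rw [h1]
    refine isOpen_biUnion fun j _ => ?_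
    exact isOpen_lt continuous_const
      (Continuous.dist
        (((f.continuous.iterate j).comp (f.symm.continuous.iterate m)).comp continuous_fst)
        (((f.continuous.iterate j).comp (f.symm.continuous.iterate m)).comp continuous_snd))
  have hUmono : Monotone U := by
    intro a b hab p hp
    obtain ⟨j, hj, hd⟩ := hp
    refine ⟨j + (b - a), by omega, ?_⟩
    have key : ∀ z : X, (⇑f)^[j + (b - a)] ((⇑f.symm)^[b] z)
        = (⇑f)^[j] ((⇑f.symm)^[a] z) := by
      intro z
      have h2 : (⇑f.symm)^[b] z = (⇑f.symm)^[b - a] ((⇑f.symm)^[a] z) := by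
        rw [← Function.iterate_add_apply]
        congr 1
        omega
      rw [h2, Function.iterate_add_apply, iter_symm_iter]
    rw [key, key]
    exact hd
  have hK : IsCompact {p : X × X | ε ≤ dist p.1 p.2} :=
    (isClosed_le continuous_const (continuous_fst.dist continuous_snd)).isCompact
  have hcover : {p : X × X | ε ≤ dist p.1 p.2} ⊆ ⋃ m, U m := by
    rintro ⟨x, y⟩ hxy
    simp only [Set.mem_setOf_eq] at hxy
    have hne : x ≠ y := by
      intro h
      rw [h] at hxy
      simp at hxy
      linarith
    have h := mt (hexp x y) hne
    push_neg at h
    obtain ⟨i, hi⟩ := h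
    rcases le_or_gt (dist ((⇑f)^[i] x) ((⇑f)^[i] y)) η with h1 | h1
    · have hd := hi h1
      exact Set.mem_iUnion.mpr ⟨i, 0, by omega, by simpa using hd⟩
    · refine Set.mem_iUnion.mpr ⟨i, i + i, by omega, ?_⟩
      have key : ∀ z : X, (⇑f)^[i + i] ((⇑f.symm)^[i] z) = (⇑f)^[i] z := by
        intro z
        rw [Function.iterate_add_apply, iter_symm_iter]
      rw [key, key]
      exact h1
  obtain ⟨t, ht⟩ := hK.elim_finite_subcover U hUopen hcover
  refine ⟨t.sup id, fun x y hxy => ?_⟩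
  have hmem : (x, y) ∈ ⋃ m ∈ t, U m := ht (le_of_lt hxy)
  obtain ⟨m, hm, hmem⟩ := Set.mem_iUnion₂.mp hmem
  exact hUmono (Finset.le_sup (f := id) hm) hmem

lemma image_sep [DecidableEq X] {η ε : ℝ} {m n : ℕ}
    (hm : ∀ x y : X, ε < dist x y →
      ∃ j ≤ 2 * m, η < dist ((⇑f)^[j] ((⇑f.symm)^[m] x)) ((⇑f)^[j] ((⇑f.symm)^[m] y)))
    (E : Finset X) (hE : IsSeparated ⇑f ε n ↑E) :
    IsSeparated ⇑f η (n + 2 * m) ↑(E.image ((⇑f.symm)^[m])) := by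
  intro x' hx' y' hy' hne
  simp only [Finset.coe_image, Set.mem_image, Finset.mem_coe] at hx' hy'
  obtain ⟨x, hx, rfl⟩ := hx'
  obtain ⟨y, hy, rfl⟩ := hy'
  have hne' : x ≠ y := fun h => hne (by rw [h])
  obtain ⟨k, hk, hd⟩ := hE x hx y hy hne'
  obtain ⟨j, hj, hd'⟩ := hm _ _ hd
  refine ⟨j + k, by omega, ?_⟩
  have key : ∀ z : X, (⇑f)^[j + k] ((⇑f.symm)^[m] z)
      = (⇑f)^[j] ((⇑f.symm)^[m] ((⇑f)^[k] z)) := by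
    intro z
    rw [Function.iterate_add_apply]
    congr 1
    exact iter_comm f k m z
  rw [key, key]
  exact hd'

end Aux

/-- For an expansive homeomorphism, the growth rate of periodic points is bounded by the
topological entropy. -/
theorem stmt10 {X : Type*} [MetricSpace X] [CompactSpace X] (f : X ≃ₜ X) (η : ℝ) (hη : 0 < η)
    (hexp : ∀ x y : X,
      (∀ n : ℕ, dist ((⇑f)^[n] x) ((⇑f)^[n] y) ≤ η ∧
        dist ((⇑f.symm)^[n] x) ((⇑f.symm)^[n] y) ≤ η) → x = y) :
    perGrowth ⇑f ≤ topEnt ⇑f := by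
  rcases isEmpty_or_nonempty X with hX | hX
  · -- empty space: everything is zero
    have hfix : ∀ n : ℕ, ({x : X | (⇑f)^[n] x = x}).ncard = 0 := by
      intro n
      simp [Set.eq_empty_of_isEmpty]
    have hsc : ∀ (ε : ℝ) (n : ℕ), sepCount ⇑f ε n = 0 := by
      intro ε n
      have h1 : {m : ℕ | ∃ E : Finset X, IsSeparated ⇑f ε n ↑E ∧ E.card = m} = {0} := by
        ext m
        constructor
        · rintro ⟨E, -, rfl⟩
          have : E = ∅ := Finset.eq_empty_of_forall_notMem fun x _ => (IsEmpty.false x).elim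
          simp [this]
        · rintro rfl
          exact ⟨∅, isSeparated_empty _ _ _, Finset.card_empty⟩
      simp [sepCount, h1]
    have h1 : perGrowth ⇑f = 0 := by
      unfold perGrowth
      simp only [hfix]
      simp [limsup_const]
    have h2 : topEnt ⇑f = 0 := by
      unfold topEnt
      have : ∀ ε : {e : ℝ // 0 < e}, entSep ⇑f ε.1 = 0 := by
        intro ε
        unfold entSep
        simp only [hsc]
        simp [limsup_const]
      simp only [this]
      exact ciSup_const
    rw [h1, h2]
  · obtain ⟨S, hS⟩ := exists_net (X := X) (half_pos hη)
    have hScard : 1 ≤ S.card := by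
      obtain ⟨x⟩ := hX
      obtain ⟨s, hs, -⟩ := hS x
      exact Finset.card_pos.mpr ⟨s, hs⟩
    set L := Real.log S.card with hLdef
    have hL0 : 0 ≤ L := log_nat_nonneg _
    -- uniform bound on entSep
    have hbdd_sep : ∀ (ε : ℝ) (n : ℕ),
        BddAbove {m : ℕ | ∃ E : Finset X, IsSeparated ⇑f ε n ↑E ∧ E.card = m} → True := fun _ _ _ => trivial
    have hent_le : ∀ ε : ℝ, 0 < ε → entSep ⇑f ε ≤ L := by
      intro ε hε
      obtain ⟨m, hm⟩ := unif_exp f hexp hε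
      have hpt : ∀ n : ℕ, Real.log (sepCount ⇑f ε n) ≤ ((n : ℝ) + 2 * m) * L := by
        intro n
        have hle : sepCount ⇑f ε n ≤ S.card ^ (n + 2 * m) := by
          classical
          refine csSup_le ⟨0, ∅, isSeparated_empty _ _ _, Finset.card_empty⟩ ?_
          rintro b ⟨E, hE, rfl⟩
          have hsep' := image_sep f hm E hE
          have hcard : (E.image ((⇑f.symm)^[m])).card = E.card :=
            Finset.card_image_of_injective _ (f.symm.injective.iterate m)
          have h3 := (sep_finite_ncard ⇑f S hS hsep').2
          rw [Set.ncard_coe_finset, hcard] at h3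
          exact h3
        calc Real.log (sepCount ⇑f ε n)
            ≤ Real.log ((S.card ^ (n + 2 * m) : ℕ) : ℝ) := log_nat_mono hle
          _ = ((n : ℝ) + 2 * m) * L := by
              rw [Nat.cast_pow, Real.log_pow]
              push_cast
              ring
      have hv : Tendsto (fun n : ℕ => ((n : ℝ) + 2 * m) * L / n) atTop (𝓝 L) := by
        have heq : (fun n : ℕ => ((n : ℝ) + 2 * m) * L / n)
            =ᶠ[atTop] fun n : ℕ => L + (2 * m * L) / n := by
          filter_upwards [eventually_gt_atTop 0] with n hn
          have hn' : (n : ℝ) ≠ 0 := Nat.cast_ne_zero.mpr hn.ne'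
          field_simp
        rw [tendsto_congr' heq]
        have h4 : Tendsto (fun n : ℕ => (2 * (m : ℝ) * L) / n) atTop (𝓝 0) :=
          Tendsto.div_atTop tendsto_const_nhds tendsto_natCast_atTop_atTop
        simpa using tendsto_const_nhds.add h4
      have hle' : (fun n : ℕ => Real.log (sepCount ⇑f ε n) / n)
          ≤ᶠ[atTop] (fun n : ℕ => ((n : ℝ) + 2 * m) * L / n) := by
        filter_upwards [eventually_ge_atTop 1] with n hn
        have hn' : (0 : ℝ) < n := by exact_mod_cast hn
        exact (div_le_div_iff_of_pos_right hn').mpr (hpt n)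
      have hcob : IsCoboundedUnder (· ≤ ·) atTop
          (fun n : ℕ => Real.log (sepCount ⇑f ε n) / n) :=
        isCoboundedUnder_le_of_le atTop (x := 0)
          (fun n => div_nonneg (log_nat_nonneg _) (Nat.cast_nonneg n))
      calc entSep ⇑f ε ≤ limsup (fun n : ℕ => ((n : ℝ) + 2 * m) * L / n) atTop :=
            limsup_le_limsup hle' hcob hv.isBoundedUnder_le
        _ = L := hv.limsup_eq
    -- perGrowth ≤ entSep f η
    have h1 : perGrowth ⇑f ≤ entSep ⇑f η := by
      have hbdd : ∀ n : ℕ, BddAbove {m : ℕ | ∃ E : Finset X, IsSeparated ⇑f η n ↑E ∧ E.card = m} := by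
        intro n
        refine ⟨S.card ^ n, ?_⟩
        rintro b ⟨E, hE, rfl⟩
        have h3 := (sep_finite_ncard ⇑f S hS hE).2
        rwa [Set.ncard_coe_finset] at h3
      have hsc_le : ∀ n : ℕ, sepCount ⇑f η n ≤ S.card ^ n := by
        intro n
        exact csSup_le ⟨0, ∅, isSeparated_empty _ _ _, Finset.card_empty⟩
          (by rintro b ⟨E, hE, rfl⟩
              have h3 := (sep_finite_ncard ⇑f S hS hE).2
              rwa [Set.ncard_coe_finset] at h3)
      have hpt : ∀ n : ℕ, 1 ≤ n →
          ({x : X | (⇑f)^[n] x = x}).ncard ≤ sepCount ⇑f η n := by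
        intro n hn
        have hsep := fix_isSeparated f hexp n hn
        obtain ⟨hfin, -⟩ := sep_finite_ncard ⇑f S hS hsep
        have hEc : (↑hfin.toFinset : Set X) = {x : X | (⇑f)^[n] x = x} := hfin.coe_toFinset
        have hsepE : IsSeparated ⇑f η n ↑hfin.toFinset := by rw [hEc]; exact hsep
        have h4 : hfin.toFinset.card ≤ sepCount ⇑f η n :=
          le_csSup (hbdd n) ⟨hfin.toFinset, hsepE, rfl⟩
        calc ({x : X | (⇑f)^[n] x = x}).ncard = (↑hfin.toFinset : Set X).ncard := by rw [hEc]
          _ = hfin.toFinset.card := Set.ncard_coe_finset _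
          _ ≤ sepCount ⇑f η n := h4
      have hle' : (fun n : ℕ => Real.log (({x : X | (⇑f)^[n] x = x}).ncard) / n)
          ≤ᶠ[atTop] (fun n : ℕ => Real.log (sepCount ⇑f η n) / n) := by
        filter_upwards [eventually_ge_atTop 1] with n hn
        have hn' : (0 : ℝ) < n := by exact_mod_cast hn
        exact (div_le_div_iff_of_pos_right hn').mpr (log_nat_mono (hpt n hn))
      have hcob : IsCoboundedUnder (· ≤ ·) atTop
          (fun n : ℕ => Real.log (({x : X | (⇑f)^[n] x = x}).ncard) / n) :=
        isCoboundedUnder_le_of_le atTop (x := 0)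
          (fun n => div_nonneg (log_nat_nonneg _) (Nat.cast_nonneg n))
      have hbddw : IsBoundedUnder (· ≤ ·) atTop
          (fun n : ℕ => Real.log (sepCount ⇑f η n) / n) := by
        refine isBoundedUnder_of ⟨L, fun n => ?_⟩
        rcases Nat.eq_zero_or_pos n with h0 | h0
        · simp [h0, hL0]
        · have hn' : (0 : ℝ) < n := by exact_mod_cast h0
          rw [div_le_iff₀ hn']
          calc Real.log (sepCount ⇑f η n)
              ≤ Real.log ((S.card ^ n : ℕ) : ℝ) := log_nat_mono (hsc_le n)
            _ = (n : ℝ) * L := by rw [Nat.cast_pow, Real.log_pow]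
            _ = L * n := by ring
      exact limsup_le_limsup hle' hcob hbddw
    have h2 : entSep ⇑f η ≤ topEnt ⇑f := by
      apply le_ciSup (f := fun ε : {e : ℝ // 0 < e} => entSep (⇑f) ε.1) ?_ ⟨η, hη⟩
      refine ⟨L, ?_⟩
      rintro x ⟨ε, rfl⟩
      exact hent_le ε.1 ε.2
    linarith
end
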